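/- arXiv:1107.0462 — 3 statements merged into one kernel-verified Lean document; each statement's English description precedes it below -/
import Mathlib

section
/- For any elements a, b, c in the Cayley–Dickson algebra A^n obtained from R by n steps of the Cayley–Dickson doubling, the real part of the associator [a,b,c] = (ab)c − a(bc) vanishes: Re([a,b,c]) = 0. -/
/-- The Cayley–Dickson algebra `A^n` obtained from `ℝ` by `n` doublings. -/
def CD : ℕ → Type
  | 0 => ℝ
  | n + 1 => CD n × CD n

namespace CD

def ofReal (r : ℝ) : CD 0 := r
def toReal (a : CD 0) : ℝ := a

noncomputable def add : {n : ℕ} → CD n → CD n → CD n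
  | 0, a, b => ofReal (toReal a + toReal b)
  | _ + 1, a, b => (add a.1 b.1, add a.2 b.2)

noncomputable def neg : {n : ℕ} → CD n → CD n
  | 0, a => ofReal (-toReal a)
  | _ + 1, a => (neg a.1, neg a.2)

noncomputable def sub {n : ℕ} (a b : CD n) : CD n := add a (neg b)

/-- Cayley–Dickson conjugation: `(a,b)* = (a*, -b)`. -/
noncomputable def conj : {n : ℕ} → CD n → CD n
  | 0, a => a
  | _ + 1, a => (conj a.1, neg a.2)

/-- Cayley–Dickson product: `(a,b)(c,d) = (ac - d*b, da + bc*)`. -/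
noncomputable def mul : {n : ℕ} → CD n → CD n → CD n
  | 0, a, b => ofReal (toReal a * toReal b)
  | _ + 1, a, b =>
      (sub (mul a.1 b.1) (mul (conj b.2) a.2), add (mul b.2 a.1) (mul a.2 (conj b.1)))

noncomputable def zero : (n : ℕ) → CD n
  | 0 => ofReal 0
  | n + 1 => (zero n, zero n)

/-- The real part `Re(a) = (a + a*)/2`, read off as a real number. -/
noncomputable def re : {n : ℕ} → CD n → ℝ
  | 0, a => toReal a
  | _ + 1, a => re a.1

/-- The standard Euclidean inner product under the identification `A^n = ℝ^(2^n)`. -/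
noncomputable def inner : {n : ℕ} → CD n → CD n → ℝ
  | 0, a, b => toReal a * toReal b
  | _ + 1, a, b => inner a.1 b.1 + inner a.2 b.2

end CD

namespace CD

theorem neg_add_eq : ∀ {n} (a b : CD n), neg (add a b) = add (neg a) (neg b)
  | 0, a, b => by change ℝ at a b; simp [neg, add, ofReal, toReal]; show (_ : ℝ) = _; ring
  | n+1, a, b => by simp [neg, add, neg_add_eq]; rfl

theorem neg_neg_eq : ∀ {n} (a : CD n), neg (neg a) = a
  | 0, a => by change ℝ at a; simp [neg, ofReal, toReal]; rfl
  | n+1, a => by simp [neg, neg_neg_eq]; rfl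

theorem add_comm_eq : ∀ {n} (a b : CD n), add a b = add b a
  | 0, a, b => by change ℝ at a b; simp [add, ofReal, toReal]; show (_ : ℝ) = _; ring
  | n+1, a, b => by
      simp only [add]; rw [add_comm_eq a.1 b.1, add_comm_eq a.2 b.2]

theorem conj_neg : ∀ {n} (a : CD n), conj (neg a) = neg (conj a)
  | 0, a => by simp [conj]
  | n+1, a => by simp [conj, neg, conj_neg]; rfl

theorem conj_conj : ∀ {n} (a : CD n), conj (conj a) = a
  | 0, a => by simp [conj]
  | n+1, a => by simp [conj, conj_conj, neg_neg_eq]; rfl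

theorem conj_add : ∀ {n} (a b : CD n), conj (add a b) = add (conj a) (conj b)
  | 0, a, b => by simp [conj]
  | n+1, a, b => by simp [conj, add, conj_add, neg_add_eq]; rfl

theorem conj_sub {n} (a b : CD n) : conj (sub a b) = sub (conj a) (conj b) := by
  simp [sub, conj_add, conj_neg]

theorem neg_sub_eq {n} (a b : CD n) : neg (sub a b) = sub (neg a) (neg b) := by
  simp [sub, neg_add_eq]

theorem mul_neg : ∀ {n} (a b : CD n),
    mul (neg a) b = neg (mul a b) ∧ mul a (neg b) = neg (mul a b)
  | 0, a, b => by change ℝ at a b; simp [mul, neg, ofReal, toReal] <;> rfl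
  | n+1, a, b => by
      have L : ∀ x y : CD n, mul (neg x) y = neg (mul x y) := fun x y => (mul_neg x y).1
      have R : ∀ x y : CD n, mul x (neg y) = neg (mul x y) := fun x y => (mul_neg x y).2
      constructor <;>
        simp [mul, neg, conj_neg, L, R, neg_sub_eq, neg_add_eq] <;> rfl

theorem mul_neg_left {n} (a b : CD n) : mul (neg a) b = neg (mul a b) := (mul_neg a b).1
theorem mul_neg_right {n} (a b : CD n) : mul a (neg b) = neg (mul a b) := (mul_neg a b).2

theorem conj_mul : ∀ {n} (a b : CD n), conj (mul a b) = mul (conj b) (conj a)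
  | 0, a, b => by change ℝ at a b; simp [mul, conj, ofReal, toReal]; show (_ : ℝ) = _; ring
  | n+1, a, b => by
      simp only [mul, conj, conj_sub, conj_mul, conj_conj, conj_neg, neg_neg_eq,
        mul_neg_left, mul_neg_right, neg_add_eq]
      exact Prod.ext rfl (add_comm_eq _ _)

theorem inner_comm : ∀ {n} (a b : CD n), inner a b = inner b a
  | 0, a, b => by simp [inner]; ring
  | n+1, a, b => by simp only [inner]; rw [inner_comm a.1 b.1, inner_comm a.2 b.2]

theorem inner_neg_left : ∀ {n} (a b : CD n), inner (neg a) b = - inner a b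
  | 0, a, b => by change ℝ at a b; simp [inner, neg, ofReal, toReal]
  | n+1, a, b => by simp [inner, neg, inner_neg_left]; ring

theorem inner_neg_right {n} (a b : CD n) : inner a (neg b) = - inner a b := by
  rw [inner_comm, inner_neg_left, inner_comm]

theorem inner_add_left : ∀ {n} (a b c : CD n), inner (add a b) c = inner a c + inner b c
  | 0, a, b, c => by change ℝ at a b c; simp [inner, add, ofReal, toReal]; ring
  | n+1, a, b, c => by simp [inner, add, inner_add_left]; ring

theorem inner_add_right {n} (a b c : CD n) : inner a (add b c) = inner a b + inner a c := by
  rw [inner_comm, inner_add_left, inner_comm b, inner_comm c]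

theorem inner_sub_left {n} (a b c : CD n) : inner (sub a b) c = inner a c - inner b c := by
  simp [sub, inner_add_left, inner_neg_left]; ring

theorem inner_sub_right {n} (a b c : CD n) : inner a (sub b c) = inner a b - inner a c := by
  simp [sub, inner_add_right, inner_neg_right]; ring

theorem inner_conj : ∀ {n} (a b : CD n), inner (conj a) (conj b) = inner a b
  | 0, a, b => by simp [inner, conj]
  | n+1, a, b => by simp [inner, conj, inner_conj, inner_neg_left, inner_neg_right]

theorem re_sub : ∀ {n} (a b : CD n), re (sub a b) = re a - re b
  | 0, a, b => by change ℝ at a b; simp [re, sub, add, neg, ofReal, toReal]; ring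
  | n+1, a, b => by simp only [re, sub, add, neg]; exact re_sub a.1 b.1

theorem re_mul_eq_inner : ∀ {n} (a b : CD n), re (mul a b) = inner a (conj b)
  | 0, a, b => by simp [re, mul, inner, conj, ofReal, toReal]
  | n+1, a, b => by
      simp only [re, mul, conj, inner]
      rw [re_sub, re_mul_eq_inner, re_mul_eq_inner, inner_neg_right,
        inner_comm b.2.conj, inner_conj]
      ring

theorem adj : ∀ {n} (a b c : CD n),
    inner (mul a b) c = inner a (mul c (conj b)) ∧
    inner (mul a b) c = inner b (mul (conj a) c)
  | 0, a, b, c => by change ℝ at a b c; simp [mul, inner, conj, ofReal, toReal]; constructor <;> ring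
  | n+1, a, b, c => by
      have R : ∀ x y z : CD n, inner (mul x y) z = inner x (mul z (conj y)) :=
        fun x y z => (adj x y z).1
      have L : ∀ x y z : CD n, inner (mul x y) z = inner y (mul (conj x) z) :=
        fun x y z => (adj x y z).2
      simp only [mul, inner, conj, inner_sub_left, inner_add_left, inner_sub_right,
        inner_add_right, inner_neg_left, inner_neg_right, mul_neg_left, mul_neg_right,
        conj_conj, conj_neg, neg_neg_eq]
      constructor
      · rw [R a.1 b.1 c.1, L (conj b.2) a.2 c.1, conj_conj, L b.2 a.1 c.2,
          R a.2 (conj b.1) c.2, conj_conj]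
        ring
      · have h1 : inner (conj b.2) (mul c.1 (conj a.2)) = inner b.2 (mul a.2 (conj c.1)) := by
          rw [← inner_conj (conj b.2), conj_conj, conj_mul, conj_conj]
        have h2 : inner (conj b.1) (mul (conj a.2) c.2) = inner b.1 (mul (conj c.2) a.2) := by
          rw [← inner_conj (conj b.1), conj_conj, conj_mul, conj_conj]
        rw [L a.1 b.1 c.1, R (conj b.2) a.2 c.1, R b.2 a.1 c.2, L a.2 (conj b.1) c.2, h1, h2]
        ring

end CD

/-- In every Cayley–Dickson algebra `A^n`, the real part of the
associator `[a,b,c] = (ab)c - a(bc)` vanishes. -/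
theorem re_associator_eq_zero (n : ℕ) (a b c : CD n) :
    CD.re (CD.sub (CD.mul (CD.mul a b) c) (CD.mul a (CD.mul b c))) = 0 := by
  rw [CD.re_sub, CD.re_mul_eq_inner, CD.re_mul_eq_inner, CD.conj_mul,
    (CD.adj a b (CD.conj c)).1]
  ring
end

section
/- The eight complex structures J_1,…,J_8 on R^16 together with the conjugation-twisted complex multiplication L = (C_q-twisted) block extension of L_i give 9 pairwise anticommuting complex structures on R^{2·16}: concretely, on R^32 = (R^16)^2 the matrices diag_{16,2}(J_α) for α=1,…,8 together with diag_{16,2}(C_1)·block_{2,16}(L_i^C) are skew-symmetric, square to −Id_32, and pairwise anticommute. -/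
/-- The octonions, as the third Cayley–Dickson algebra. -/
noncomputable abbrev Oct : Type := CD 3

noncomputable def r2 (a b : ℝ) : CD 1 := (CD.ofReal a, CD.ofReal b)
noncomputable def r4 (a b c d : ℝ) : CD 2 := (r2 a b, r2 c d)
noncomputable def r8 (a b c d e f g h : ℝ) : Oct := (r4 a b c d, r4 e f g h)

/-- The standard basis `1, i, j, k, e, f, g, h` of the octonions. -/
noncomputable def octBasis : Fin 8 → Oct :=
  ![r8 1 0 0 0 0 0 0 0, r8 0 1 0 0 0 0 0 0, r8 0 0 1 0 0 0 0 0, r8 0 0 0 1 0 0 0 0,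
    r8 0 0 0 0 1 0 0 0, r8 0 0 0 0 0 1 0 0, r8 0 0 0 0 0 0 1 0, r8 0 0 0 0 0 0 0 1]
open Matrix

/-- Reindexing a square matrix along an equality of dimensions. -/
noncomputable def castM {a b : ℕ} (h : a = b) (M : Matrix (Fin a) (Fin a) ℝ) :
    Matrix (Fin b) (Fin b) ℝ :=
  Matrix.reindex (finCongr h) (finCongr h) M

/-- `diagExt m n A = Id_n ⊗ A`: the block-diagonal matrix with `n` copies of
the `m × m` matrix `A` along the diagonal. -/
noncomputable def diagExt (m n : ℕ) (A : Matrix (Fin m) (Fin m) ℝ) :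
    Matrix (Fin (m * n)) (Fin (m * n)) ℝ :=
  Matrix.of fun i j =>
    if hm : 0 < m then
      if i.val / m = j.val / m then
        A ⟨i.val % m, Nat.mod_lt _ hm⟩ ⟨j.val % m, Nat.mod_lt _ hm⟩
      else 0
    else 0

/-- `blockExt m n A = A ⊗ Id_n`: each entry `a` of the `m × m` matrix `A` is
replaced by the `n × n` block `a • Id_n`. -/
noncomputable def blockExt (m n : ℕ) (A : Matrix (Fin m) (Fin m) ℝ) :
    Matrix (Fin (m * n)) (Fin (m * n)) ℝ :=
  Matrix.of fun i j =>
    if hn : 0 < n then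
      if i.val % n = j.val % n then
        A ⟨i.val / n, (Nat.div_lt_iff_lt_mul hn).2 i.isLt⟩
          ⟨j.val / n, (Nat.div_lt_iff_lt_mul hn).2 j.isLt⟩
      else 0
    else 0

/-- The matrix (in the standard orthonormal basis of `𝕆 = ℝ^8`) of right
multiplication `R_u : x ↦ x·u` by the octonion `u`. -/
noncomputable def Rmat (u : Oct) : Matrix (Fin 8) (Fin 8) ℝ :=
  Matrix.of fun r c => CD.inner (CD.mul (octBasis c) u) (octBasis r)

/-- The matrix (in the standard orthonormal basis of `𝕆 = ℝ^8`) of left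
multiplication `L_u : x ↦ u·x` by the octonion `u`. -/
noncomputable def Lmat (u : Oct) : Matrix (Fin 8) (Fin 8) ℝ :=
  Matrix.of fun r c => CD.inner (CD.mul u (octBasis c)) (octBasis r)

noncomputable def toMat16 (M : Matrix (Fin 8 ⊕ Fin 8) (Fin 8 ⊕ Fin 8) ℝ) :
    Matrix (Fin 16) (Fin 16) ℝ :=
  Matrix.reindex (finSumFinEquiv.trans (finCongr (show 8 + 8 = 16 by norm_num)))
    (finSumFinEquiv.trans (finCongr (show 8 + 8 = 16 by norm_num))) M

/-- The eight standard `Spin(9)` complex structures on `ℝ^16` (indexed `0,…,7`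
for `J₁,…,J₈`): `J₁ = [[0,-Id₈],[Id₈,0]]` and `J_{α+1} = [[0,R_u],[R_u,0]]` for
the imaginary octonion units `u = i,j,k,e,f,g,h`. -/
noncomputable def J16 (α : Fin 8) : Matrix (Fin 16) (Fin 16) ℝ :=
  toMat16 <|
    if α = 0 then Matrix.fromBlocks 0 (-1) 1 0
    else Matrix.fromBlocks 0 (Rmat (octBasis α)) (Rmat (octBasis α)) 0

/-- The diagonal involution `C_N` changing sign on the last half of the
coordinates of `ℝ^N`. -/
noncomputable def Cmat (N : ℕ) : Matrix (Fin N) (Fin N) ℝ :=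
  Matrix.diagonal fun i => if 2 * i.val < N then 1 else -1

/-- The diagonal extensions `diag_{16,2}(J_α)` on `ℝ^32`. -/
noncomputable def A32 (α : Fin 8) : Matrix (Fin 32) (Fin 32) ℝ :=
  castM (by norm_num) (diagExt 16 2 (J16 α))

/-- `L_i^ℂ = [[0,-1],[1,0]]`. -/
noncomputable def LiC : Matrix (Fin 2) (Fin 2) ℝ := !![0, -1; 1, 0]

/-- The conjugation-twisted complex multiplication
`diag_{16,2}(C₁) · block_{2,16}(L_i^ℂ)` on `ℝ^32`. -/
noncomputable def L32 : Matrix (Fin 32) (Fin 32) ℝ :=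
  castM (by norm_num) (diagExt 16 2 (Cmat 16)) * castM (by norm_num) (blockExt 2 16 LiC)

/-- The nine matrices of Statement 15: `diag_{16,2}(J₁),…,diag_{16,2}(J₈)`
together with `diag_{16,2}(C₁) · block_{2,16}(L_i^ℂ)`. -/
noncomputable def F32 (β : Fin 9) : Matrix (Fin 32) (Fin 32) ℝ :=
  if h : β.val < 8 then A32 ⟨β.val, h⟩ else L32

namespace NineAux

open Matrix

/-! ### Octonion arithmetic -/

lemma mul_r8 (a b c d e f g h a' b' c' d' e' f' g' h' : ℝ) :
    CD.mul (r8 a b c d e f g h) (r8 a' b' c' d' e' f' g' h') =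
    r8 (a*a' - b*b' - c*c' - d*d' - e*e' - f*f' - g*g' - h*h')
      (a*b' + a'*b + c*d' - c'*d + e*f' - e'*f - g*h' + g'*h)
      (a*c' + a'*c - b*d' + b'*d + e*g' - e'*g + f*h' - f'*h)
      (a*d' + a'*d + b*c' - b'*c + e*h' - e'*h - f*g' + f'*g)
      (a*e' + a'*e - b*f' + b'*f - c*g' + c'*g - d*h' + d'*h)
      (a*f' + a'*f + b*e' - b'*e - c*h' + c'*h + d*g' - d'*g)
      (a*g' + a'*g + b*h' - b'*h + c*e' - c'*e - d*f' + d'*f)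
      (a*h' + a'*h - b*g' + b'*g + c*f' - c'*f + d*e' - d'*e) := by
  simp only [r8, r4, r2, CD.mul, CD.sub, CD.add, CD.neg, CD.conj, CD.ofReal, CD.toReal,
    Prod.mk.injEq]
  refine Prod.ext (Prod.ext (Prod.ext ?_ ?_) (Prod.ext ?_ ?_))
    (Prod.ext (Prod.ext ?_ ?_) (Prod.ext ?_ ?_)) <;> (show (_ : ℝ) = _; ring)

lemma inner_r8 (a b c d e f g h a' b' c' d' e' f' g' h' : ℝ) :
    CD.inner (r8 a b c d e f g h) (r8 a' b' c' d' e' f' g' h') =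
    a*a' + b*b' + c*c' + d*d' + e*e' + f*f' + g*g' + h*h' := by
  simp only [r8, r4, r2, CD.inner, CD.ofReal, CD.toReal]
  ring

/-- Integer model of the right-multiplication matrices `Rmat (octBasis k)`. -/
noncomputable def RZ : Fin 8 → Matrix (Fin 8) (Fin 8) ℤ :=
  ![
  !![1, 0, 0, 0, 0, 0, 0, 0;
      0, 1, 0, 0, 0, 0, 0, 0;
      0, 0, 1, 0, 0, 0, 0, 0;
      0, 0, 0, 1, 0, 0, 0, 0;
      0, 0, 0, 0, 1, 0, 0, 0;
      0, 0, 0, 0, 0, 1, 0, 0;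
      0, 0, 0, 0, 0, 0, 1, 0;
      0, 0, 0, 0, 0, 0, 0, 1],
  !![0, -1, 0, 0, 0, 0, 0, 0;
      1, 0, 0, 0, 0, 0, 0, 0;
      0, 0, 0, 1, 0, 0, 0, 0;
      0, 0, -1, 0, 0, 0, 0, 0;
      0, 0, 0, 0, 0, 1, 0, 0;
      0, 0, 0, 0, -1, 0, 0, 0;
      0, 0, 0, 0, 0, 0, 0, -1;
      0, 0, 0, 0, 0, 0, 1, 0],
  !![0, 0, -1, 0, 0, 0, 0, 0;
      0, 0, 0, -1, 0, 0, 0, 0;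
      1, 0, 0, 0, 0, 0, 0, 0;
      0, 1, 0, 0, 0, 0, 0, 0;
      0, 0, 0, 0, 0, 0, 1, 0;
      0, 0, 0, 0, 0, 0, 0, 1;
      0, 0, 0, 0, -1, 0, 0, 0;
      0, 0, 0, 0, 0, -1, 0, 0],
  !![0, 0, 0, -1, 0, 0, 0, 0;
      0, 0, 1, 0, 0, 0, 0, 0;
      0, -1, 0, 0, 0, 0, 0, 0;
      1, 0, 0, 0, 0, 0, 0, 0;
      0, 0, 0, 0, 0, 0, 0, 1;
      0, 0, 0, 0, 0, 0, -1, 0;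
      0, 0, 0, 0, 0, 1, 0, 0;
      0, 0, 0, 0, -1, 0, 0, 0],
  !![0, 0, 0, 0, -1, 0, 0, 0;
      0, 0, 0, 0, 0, -1, 0, 0;
      0, 0, 0, 0, 0, 0, -1, 0;
      0, 0, 0, 0, 0, 0, 0, -1;
      1, 0, 0, 0, 0, 0, 0, 0;
      0, 1, 0, 0, 0, 0, 0, 0;
      0, 0, 1, 0, 0, 0, 0, 0;
      0, 0, 0, 1, 0, 0, 0, 0],
  !![0, 0, 0, 0, 0, -1, 0, 0;
      0, 0, 0, 0, 1, 0, 0, 0;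
      0, 0, 0, 0, 0, 0, 0, -1;
      0, 0, 0, 0, 0, 0, 1, 0;
      0, -1, 0, 0, 0, 0, 0, 0;
      1, 0, 0, 0, 0, 0, 0, 0;
      0, 0, 0, -1, 0, 0, 0, 0;
      0, 0, 1, 0, 0, 0, 0, 0],
  !![0, 0, 0, 0, 0, 0, -1, 0;
      0, 0, 0, 0, 0, 0, 0, 1;
      0, 0, 0, 0, 1, 0, 0, 0;
      0, 0, 0, 0, 0, -1, 0, 0;
      0, 0, -1, 0, 0, 0, 0, 0;
      0, 0, 0, 1, 0, 0, 0, 0;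
      1, 0, 0, 0, 0, 0, 0, 0;
      0, -1, 0, 0, 0, 0, 0, 0],
  !![0, 0, 0, 0, 0, 0, 0, -1;
      0, 0, 0, 0, 0, 0, -1, 0;
      0, 0, 0, 0, 0, 1, 0, 0;
      0, 0, 0, 0, 1, 0, 0, 0;
      0, 0, 0, -1, 0, 0, 0, 0;
      0, 0, -1, 0, 0, 0, 0, 0;
      0, 1, 0, 0, 0, 0, 0, 0;
      1, 0, 0, 0, 0, 0, 0, 0]]

set_option maxHeartbeats 2000000 in
lemma Rmat_eq (k : Fin 8) : Rmat (octBasis k) = (RZ k).map ((↑) : ℤ → ℝ) := by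
  fin_cases k <;> · ext i j
                    fin_cases i <;> fin_cases j <;>
                      norm_num [Rmat, octBasis, RZ, mul_r8, inner_r8]

lemma RZ_skew : ∀ k : Fin 8, k ≠ 0 → (RZ k)ᵀ = -RZ k := by decide
lemma RZ_sq : ∀ k : Fin 8, k ≠ 0 → RZ k * RZ k = -1 := by decide
set_option maxHeartbeats 2000000 in
lemma RZ_anti : ∀ k l : Fin 8, k ≠ 0 → l ≠ 0 → k ≠ l →
    RZ k * RZ l + RZ l * RZ k = 0 := by decide

/-! ### Entrywise integer casting -/

lemma mapZ_mul (A B : Matrix (Fin 8) (Fin 8) ℤ) :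
    (A * B).map ((↑) : ℤ → ℝ) = A.map ((↑) : ℤ → ℝ) * B.map ((↑) : ℤ → ℝ) := by
  rw [show ((↑) : ℤ → ℝ) = ⇑(Int.castRingHom ℝ) from rfl]
  exact Matrix.map_mul

lemma mapZ_add (A B : Matrix (Fin 8) (Fin 8) ℤ) :
    (A + B).map ((↑) : ℤ → ℝ) = A.map ((↑) : ℤ → ℝ) + B.map ((↑) : ℤ → ℝ) := by
  ext i j; simp

lemma mapZ_neg (A : Matrix (Fin 8) (Fin 8) ℤ) :
    (-A).map ((↑) : ℤ → ℝ) = -(A.map ((↑) : ℤ → ℝ)) := by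
  ext i j; simp

lemma mapZ_transpose (A : Matrix (Fin 8) (Fin 8) ℤ) :
    Aᵀ.map ((↑) : ℤ → ℝ) = (A.map ((↑) : ℤ → ℝ))ᵀ := by
  ext i j; simp

lemma mapZ_one : ((1 : Matrix (Fin 8) (Fin 8) ℤ)).map ((↑) : ℤ → ℝ) = 1 := by
  ext i j
  simp [Matrix.map_apply, Matrix.one_apply, apply_ite ((↑) : ℤ → ℝ)]

lemma mapZ_zero : ((0 : Matrix (Fin 8) (Fin 8) ℤ)).map ((↑) : ℤ → ℝ) = 0 := by
  ext i j; simp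

lemma Rmat_skew {k : Fin 8} (hk : k ≠ 0) :
    (Rmat (octBasis k))ᵀ = -Rmat (octBasis k) := by
  rw [Rmat_eq, ← mapZ_transpose, RZ_skew k hk, mapZ_neg]

lemma Rmat_sq {k : Fin 8} (hk : k ≠ 0) :
    Rmat (octBasis k) * Rmat (octBasis k) = -1 := by
  rw [Rmat_eq, ← mapZ_mul, RZ_sq k hk, mapZ_neg, mapZ_one]

lemma Rmat_anti {k l : Fin 8} (hk : k ≠ 0) (hl : l ≠ 0) (hkl : k ≠ l) :
    Rmat (octBasis k) * Rmat (octBasis l) + Rmat (octBasis l) * Rmat (octBasis k) = 0 := by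
  rw [Rmat_eq, Rmat_eq, ← mapZ_mul, ← mapZ_mul, ← mapZ_add, RZ_anti k l hk hl hkl, mapZ_zero]

/-! ### Reindexing along `Fin m ⊕ Fin n ≃ Fin N` -/

lemma sumCast_symm_apply {m n N : ℕ} (h : m + n = N) (x : Fin N) :
    (finSumFinEquiv.trans (finCongr h)).symm x =
      if hx : x.val < m then Sum.inl ⟨x.val, hx⟩ else Sum.inr ⟨x.val - m, by omega⟩ := by
  rw [Equiv.symm_apply_eq]
  split_ifs with hx <;> apply Fin.ext <;>
    simp only [Equiv.trans_apply, finCongr_apply, Fin.coe_cast,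
      finSumFinEquiv_apply_left, finSumFinEquiv_apply_right,
      Fin.coe_castAdd, Fin.coe_natAdd] <;>
    omega

noncomputable def toMat32 (M : Matrix (Fin 16 ⊕ Fin 16) (Fin 16 ⊕ Fin 16) ℝ) :
    Matrix (Fin 32) (Fin 32) ℝ :=
  Matrix.reindex (finSumFinEquiv.trans (finCongr (show 16 + 16 = 32 by norm_num)))
    (finSumFinEquiv.trans (finCongr (show 16 + 16 = 32 by norm_num))) M

lemma toMat32_mul (A B : Matrix (Fin 16 ⊕ Fin 16) (Fin 16 ⊕ Fin 16) ℝ) :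
    toMat32 A * toMat32 B = toMat32 (A * B) := by
  simp only [toMat32, Matrix.reindex_apply]
  exact Matrix.submatrix_mul_equiv A B _ _ _

lemma toMat32_transpose (A : Matrix (Fin 16 ⊕ Fin 16) (Fin 16 ⊕ Fin 16) ℝ) :
    (toMat32 A)ᵀ = toMat32 Aᵀ := by
  simp only [toMat32, Matrix.reindex_apply, Matrix.transpose_submatrix]

lemma toMat32_neg (A : Matrix (Fin 16 ⊕ Fin 16) (Fin 16 ⊕ Fin 16) ℝ) :
    toMat32 (-A) = -toMat32 A := by
  ext i j
  simp only [toMat32, Matrix.reindex_apply, Matrix.submatrix_apply, Matrix.neg_apply]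

lemma toMat32_add (A B : Matrix (Fin 16 ⊕ Fin 16) (Fin 16 ⊕ Fin 16) ℝ) :
    toMat32 (A + B) = toMat32 A + toMat32 B := by
  ext i j
  simp only [toMat32, Matrix.reindex_apply, Matrix.submatrix_apply, Matrix.add_apply]

lemma toMat32_one : toMat32 1 = 1 := by
  simp only [toMat32, Matrix.reindex_apply, Matrix.submatrix_one_equiv]

lemma toMat32_zero : toMat32 0 = 0 := by
  ext i j
  simp only [toMat32, Matrix.reindex_apply, Matrix.submatrix_apply, Matrix.zero_apply]

lemma toMat16_mul (A B : Matrix (Fin 8 ⊕ Fin 8) (Fin 8 ⊕ Fin 8) ℝ) :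
    toMat16 A * toMat16 B = toMat16 (A * B) := by
  simp only [toMat16, Matrix.reindex_apply]
  exact Matrix.submatrix_mul_equiv A B _ _ _

lemma toMat16_transpose (A : Matrix (Fin 8 ⊕ Fin 8) (Fin 8 ⊕ Fin 8) ℝ) :
    (toMat16 A)ᵀ = toMat16 Aᵀ := by
  simp only [toMat16, Matrix.reindex_apply, Matrix.transpose_submatrix]

lemma toMat16_neg (A : Matrix (Fin 8 ⊕ Fin 8) (Fin 8 ⊕ Fin 8) ℝ) :
    toMat16 (-A) = -toMat16 A := by
  ext i j
  simp only [toMat16, Matrix.reindex_apply, Matrix.submatrix_apply, Matrix.neg_apply]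

lemma toMat16_add (A B : Matrix (Fin 8 ⊕ Fin 8) (Fin 8 ⊕ Fin 8) ℝ) :
    toMat16 (A + B) = toMat16 A + toMat16 B := by
  ext i j
  simp only [toMat16, Matrix.reindex_apply, Matrix.submatrix_apply, Matrix.add_apply]

lemma toMat16_one : toMat16 1 = 1 := by
  simp only [toMat16, Matrix.reindex_apply, Matrix.submatrix_one_equiv]

lemma toMat16_zero : toMat16 0 = 0 := by
  ext i j
  simp only [toMat16, Matrix.reindex_apply, Matrix.submatrix_apply, Matrix.zero_apply]

/-! ### Block negative identities -/

lemma negOne8 :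
    Matrix.fromBlocks (-1 : Matrix (Fin 8) (Fin 8) ℝ) 0 0 (-1)
      = (-1 : Matrix (Fin 8 ⊕ Fin 8) (Fin 8 ⊕ Fin 8) ℝ) := by
  rw [← Matrix.fromBlocks_one (l := Fin 8) (m := Fin 8) (α := ℝ), Matrix.fromBlocks_neg]
  norm_num

lemma negOne16 :
    Matrix.fromBlocks (-1 : Matrix (Fin 16) (Fin 16) ℝ) 0 0 (-1)
      = (-1 : Matrix (Fin 16 ⊕ Fin 16) (Fin 16 ⊕ Fin 16) ℝ) := by
  rw [← Matrix.fromBlocks_one (l := Fin 16) (m := Fin 16) (α := ℝ), Matrix.fromBlocks_neg]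
  norm_num

/-! ### Identification of the 32×32 constructions with block matrices -/

lemma diagExt_eq (h : 16 * 2 = 32) (A : Matrix (Fin 16) (Fin 16) ℝ) :
    castM h (diagExt 16 2 A) = toMat32 (fromBlocks A 0 0 A) := by
  ext i j
  simp only [castM, toMat32, Matrix.reindex_apply, Matrix.submatrix_apply,
    sumCast_symm_apply, diagExt, Matrix.of_apply, finCongr_symm, finCongr_apply, Fin.coe_cast]
  rw [dif_pos (by norm_num : (0:ℕ) < 16)]
  rcases Nat.lt_or_ge i.val 16 with hi | hi <;> rcases Nat.lt_or_ge j.val 16 with hj | hj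
  · rw [dif_pos hi, dif_pos hj, Matrix.fromBlocks_apply₁₁,
      if_pos (show i.val / 16 = j.val / 16 by omega)]
    congr 1
    · exact Fin.ext (show i.val % 16 = i.val by omega)
    · exact Fin.ext (show j.val % 16 = j.val by omega)
  · rw [dif_pos hi, dif_neg (by omega), Matrix.fromBlocks_apply₁₂, Matrix.zero_apply,
      if_neg (show ¬ i.val / 16 = j.val / 16 by omega)]
  · rw [dif_neg (by omega), dif_pos hj, Matrix.fromBlocks_apply₂₁, Matrix.zero_apply,
      if_neg (show ¬ i.val / 16 = j.val / 16 by omega)]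
  · rw [dif_neg (by omega), dif_neg (by omega), Matrix.fromBlocks_apply₂₂,
      if_pos (show i.val / 16 = j.val / 16 by omega)]
    congr 1
    · exact Fin.ext (show i.val % 16 = i.val - 16 by omega)
    · exact Fin.ext (show j.val % 16 = j.val - 16 by omega)

lemma LiC_apply (q q' : Fin 2) :
    LiC q q' = if q.val = 0 then (if q'.val = 0 then 0 else -1)
               else (if q'.val = 0 then 1 else 0) := by
  fin_cases q <;> fin_cases q' <;> simp [LiC]

lemma blockExt_eq (h : 2 * 16 = 32) :
    castM h (blockExt 2 16 LiC) = toMat32 (fromBlocks 0 (-1) 1 0) := by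
  ext i j
  simp only [castM, toMat32, Matrix.reindex_apply, Matrix.submatrix_apply,
    sumCast_symm_apply, blockExt, Matrix.of_apply, finCongr_symm, finCongr_apply, Fin.coe_cast]
  rw [dif_pos (by norm_num : (0:ℕ) < 16), LiC_apply]
  rcases Nat.lt_or_ge i.val 16 with hi | hi <;> rcases Nat.lt_or_ge j.val 16 with hj | hj
  · rw [dif_pos hi, dif_pos hj, Matrix.fromBlocks_apply₁₁, Matrix.zero_apply,
      if_pos (show ((⟨i.val / 16, by omega⟩ : Fin 2) : ℕ) = 0 by show i.val / 16 = 0; omega),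
      if_pos (show ((⟨j.val / 16, by omega⟩ : Fin 2) : ℕ) = 0 by show j.val / 16 = 0; omega),
      ite_self]
  · rw [dif_pos hi, dif_neg (by omega), Matrix.fromBlocks_apply₁₂, Matrix.neg_apply,
      Matrix.one_apply,
      if_pos (show ((⟨i.val / 16, by omega⟩ : Fin 2) : ℕ) = 0 by show i.val / 16 = 0; omega),
      if_neg (show ¬ ((⟨j.val / 16, by omega⟩ : Fin 2) : ℕ) = 0 by show ¬ j.val / 16 = 0; omega)]
    by_cases hij : i.val % 16 = j.val % 16
    · rw [if_pos hij, if_pos (show (⟨i.val, hi⟩ : Fin 16) = ⟨j.val - 16, by omega⟩ from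
        Fin.ext (by show i.val = j.val - 16; omega))]
    · rw [if_neg hij, if_neg (show ¬ (⟨i.val, hi⟩ : Fin 16) = ⟨j.val - 16, by omega⟩ by
        simp only [ne_eq, Fin.mk.injEq]; omega), neg_zero]
  · rw [dif_neg (by omega), dif_pos hj, Matrix.fromBlocks_apply₂₁, Matrix.one_apply,
      if_neg (show ¬ ((⟨i.val / 16, by omega⟩ : Fin 2) : ℕ) = 0 by show ¬ i.val / 16 = 0; omega),
      if_pos (show ((⟨j.val / 16, by omega⟩ : Fin 2) : ℕ) = 0 by show j.val / 16 = 0; omega)]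
    by_cases hij : i.val % 16 = j.val % 16
    · rw [if_pos hij, if_pos (show (⟨i.val - 16, by omega⟩ : Fin 16) = ⟨j.val, hj⟩ from
        Fin.ext (by show i.val - 16 = j.val; omega))]
    · rw [if_neg hij, if_neg (show ¬ (⟨i.val - 16, by omega⟩ : Fin 16) = ⟨j.val, hj⟩ by
        simp only [ne_eq, Fin.mk.injEq]; omega)]
  · rw [dif_neg (by omega), dif_neg (by omega), Matrix.fromBlocks_apply₂₂, Matrix.zero_apply,
      if_neg (show ¬ ((⟨i.val / 16, by omega⟩ : Fin 2) : ℕ) = 0 by show ¬ i.val / 16 = 0; omega),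
      if_neg (show ¬ ((⟨j.val / 16, by omega⟩ : Fin 2) : ℕ) = 0 by show ¬ j.val / 16 = 0; omega),
      ite_self]

lemma Cmat_eq : Cmat 16 = toMat16 (fromBlocks 1 0 0 (-1)) := by
  ext i j
  simp only [Cmat, toMat16, Matrix.reindex_apply, Matrix.submatrix_apply, sumCast_symm_apply,
    Matrix.diagonal_apply]
  rcases Nat.lt_or_ge i.val 8 with hi | hi <;> rcases Nat.lt_or_ge j.val 8 with hj | hj
  · rw [dif_pos hi, dif_pos hj]
    simp only [Matrix.fromBlocks_apply₁₁, Matrix.one_apply, Fin.ext_iff, Fin.mk.injEq]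
    split_ifs <;> first | rfl | omega | norm_num
  · rw [dif_pos hi, dif_neg (by omega)]
    simp only [Matrix.fromBlocks_apply₁₂, Matrix.zero_apply]
    rw [if_neg (show ¬ i = j by simp only [Fin.ext_iff]; omega)]
  · rw [dif_neg (by omega), dif_pos hj]
    simp only [Matrix.fromBlocks_apply₂₁, Matrix.zero_apply]
    rw [if_neg (show ¬ i = j by simp only [Fin.ext_iff]; omega)]
  · rw [dif_neg (by omega), dif_neg (by omega)]
    simp only [Matrix.fromBlocks_apply₂₂, Matrix.neg_apply, Matrix.one_apply, Fin.ext_iff,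
      Fin.mk.injEq]
    split_ifs <;> first | rfl | omega | norm_num

/-! ### The 16×16 complex structures as block matrices -/

noncomputable def JB (α : Fin 8) : Matrix (Fin 8 ⊕ Fin 8) (Fin 8 ⊕ Fin 8) ℝ :=
  if α = 0 then Matrix.fromBlocks 0 (-1) 1 0
  else Matrix.fromBlocks 0 (Rmat (octBasis α)) (Rmat (octBasis α)) 0

lemma J16_eq (α : Fin 8) : J16 α = toMat16 (JB α) := rfl

lemma CB_mul_JB (α : Fin 8) :
    fromBlocks 1 0 0 (-1) * JB α + JB α * fromBlocks 1 0 0 (-1) = 0 := by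
  unfold JB
  split_ifs <;>
    simp [Matrix.fromBlocks_multiply, Matrix.fromBlocks_add, Matrix.fromBlocks_zero,
      mul_neg, neg_mul]

lemma JB_transpose (α : Fin 8) : (JB α)ᵀ = -JB α := by
  unfold JB
  split_ifs with hα
  · simp [Matrix.fromBlocks_transpose, Matrix.fromBlocks_neg]
  · simp [Matrix.fromBlocks_transpose, Matrix.fromBlocks_neg, Rmat_skew hα]

lemma JB_sq (α : Fin 8) : JB α * JB α = -1 := by
  unfold JB
  split_ifs with hα
  · rw [Matrix.fromBlocks_multiply]
    simp only [Matrix.zero_mul, Matrix.mul_zero, add_zero, zero_add, neg_mul, one_mul,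
      mul_neg, mul_one, neg_zero]
    exact negOne8
  · rw [Matrix.fromBlocks_multiply]
    simp only [Matrix.zero_mul, Matrix.mul_zero, add_zero, zero_add, Rmat_sq hα]
    exact negOne8

lemma JB_anti {α β : Fin 8} (hab : α ≠ β) : JB α * JB β + JB β * JB α = 0 := by
  unfold JB
  rcases eq_or_ne α 0 with rfl | ha <;> rcases eq_or_ne β 0 with rfl | hb
  · exact absurd rfl hab
  · simp [Matrix.fromBlocks_multiply, Matrix.fromBlocks_add, Matrix.fromBlocks_zero,
      mul_neg, neg_mul, hb]
  · simp [Matrix.fromBlocks_multiply, Matrix.fromBlocks_add, Matrix.fromBlocks_zero,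
      mul_neg, neg_mul, ha]
  · rw [if_neg ha, if_neg hb, Matrix.fromBlocks_multiply, Matrix.fromBlocks_multiply,
      Matrix.fromBlocks_add]
    simp only [Matrix.zero_mul, Matrix.mul_zero, add_zero, zero_add]
    rw [Rmat_anti ha hb hab]
    exact Matrix.fromBlocks_zero

/-! ### 32×32 level -/

lemma A32_eq (α : Fin 8) :
    A32 α = toMat32 (fromBlocks (J16 α) 0 0 (J16 α)) := by
  rw [A32, diagExt_eq]

lemma Cmat_sq : Cmat 16 * Cmat 16 = 1 := by
  rw [Cmat_eq, toMat16_mul, Matrix.fromBlocks_multiply]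
  simp only [Matrix.zero_mul, Matrix.mul_zero, add_zero, zero_add, one_mul, mul_one,
    neg_mul, mul_neg, neg_neg, one_mul, neg_zero]
  rw [Matrix.fromBlocks_one, toMat16_one]

lemma Cmat_transpose : (Cmat 16)ᵀ = Cmat 16 := Matrix.diagonal_transpose _

lemma L32_eq : L32 = toMat32 (fromBlocks 0 (-(Cmat 16)) (Cmat 16) 0) := by
  rw [L32, diagExt_eq, blockExt_eq, toMat32_mul]
  congr 1
  rw [Matrix.fromBlocks_multiply]
  simp only [Matrix.zero_mul, Matrix.mul_zero, add_zero, zero_add, mul_neg, mul_one,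
    Matrix.mul_zero, neg_zero]

lemma Cmat_J16_anti (α : Fin 8) : Cmat 16 * J16 α + J16 α * Cmat 16 = 0 := by
  rw [Cmat_eq, J16_eq, toMat16_mul, toMat16_mul, ← toMat16_add, CB_mul_JB, toMat16_zero]

lemma J16_transpose (α : Fin 8) : (J16 α)ᵀ = -J16 α := by
  rw [J16_eq, toMat16_transpose, JB_transpose, toMat16_neg, ← J16_eq]

lemma J16_sq (α : Fin 8) : J16 α * J16 α = -1 := by
  rw [J16_eq, toMat16_mul, JB_sq, toMat16_neg, toMat16_one]

lemma J16_anti {α β : Fin 8} (hab : α ≠ β) : J16 α * J16 β + J16 β * J16 α = 0 := by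
  rw [J16_eq α, J16_eq β, toMat16_mul, toMat16_mul, ← toMat16_add, JB_anti hab, toMat16_zero]

lemma F32_skew (β : Fin 9) : (F32 β)ᵀ = -F32 β := by
  rw [F32]
  split_ifs with h
  · rw [A32_eq, toMat32_transpose, Matrix.fromBlocks_transpose, Matrix.transpose_zero,
      J16_transpose, ← toMat32_neg]
    congr 1
    simp [Matrix.fromBlocks_neg]
  · rw [L32_eq, toMat32_transpose, Matrix.fromBlocks_transpose, Matrix.transpose_zero,
      Matrix.transpose_neg, Cmat_transpose, ← toMat32_neg]
    congr 1
    simp [Matrix.fromBlocks_neg]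

lemma F32_sq (β : Fin 9) : F32 β * F32 β = -1 := by
  rw [F32]
  split_ifs with h
  · rw [A32_eq, toMat32_mul, Matrix.fromBlocks_multiply]
    simp only [Matrix.zero_mul, Matrix.mul_zero, add_zero, zero_add, J16_sq]
    rw [negOne16, toMat32_neg, toMat32_one]
  · rw [L32_eq, toMat32_mul, Matrix.fromBlocks_multiply]
    simp only [Matrix.zero_mul, Matrix.mul_zero, add_zero, zero_add,
      neg_mul, mul_neg, Cmat_sq, neg_zero]
    rw [negOne16, toMat32_neg, toMat32_one]

lemma AL_anti (α : Fin 8) :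
    A32 α * L32 + L32 * A32 α = 0 := by
  have h : Cmat 16 * J16 α + J16 α * Cmat 16 = 0 := Cmat_J16_anti α
  have h' : J16 α * Cmat 16 + Cmat 16 * J16 α = 0 := by rw [add_comm]; exact h
  rw [A32_eq, L32_eq, toMat32_mul, toMat32_mul, ← toMat32_add, ← toMat32_zero]
  congr 1
  rw [Matrix.fromBlocks_multiply, Matrix.fromBlocks_multiply, Matrix.fromBlocks_add]
  simp only [Matrix.zero_mul, Matrix.mul_zero, add_zero, zero_add, mul_neg, neg_mul,
    neg_zero, ← neg_add]
  rw [h']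
  simp only [neg_zero]
  rw [Matrix.fromBlocks_zero]

lemma F32_anti {β γ : Fin 9} (h : β ≠ γ) : F32 β * F32 γ + F32 γ * F32 β = 0 := by
  rw [F32, F32]
  split_ifs with hb hg hg
  · have hab : (⟨β.val, hb⟩ : Fin 8) ≠ ⟨γ.val, hg⟩ := by
      simp only [ne_eq, Fin.mk.injEq]
      exact fun hv => h (Fin.ext hv)
    rw [A32_eq, A32_eq, toMat32_mul, toMat32_mul, ← toMat32_add, ← toMat32_zero]
    congr 1
    rw [Matrix.fromBlocks_multiply, Matrix.fromBlocks_multiply, Matrix.fromBlocks_add]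
    simp only [Matrix.zero_mul, Matrix.mul_zero, add_zero, zero_add]
    rw [J16_anti hab]
    rw [Matrix.fromBlocks_zero]
  · exact AL_anti _
  · rw [add_comm]
    exact AL_anti _
  · exact absurd (Fin.ext (by omega)) h

end NineAux

/-- On `ℝ^32`, the matrices `diag_{16,2}(J_α)` (`α = 1,…,8`)
together with `diag_{16,2}(C₁) · block_{2,16}(L_i^ℂ)` are nine skew-symmetric
matrices squaring to `-Id₃₂` and pairwise anticommuting. -/
theorem nine_structures_on_R32 (β γ : Fin 9) :
    (F32 β)ᵀ = -F32 β ∧ F32 β * F32 β = -1 ∧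
    (β ≠ γ → F32 β * F32 γ + F32 γ * F32 β = 0) := by
  exact ⟨NineAux.F32_skew β, NineAux.F32_sq β, fun h => NineAux.F32_anti h⟩
end

section
/- The left multiplications L_i, L_j, L_k, L_e, L_f, L_g, L_h by the seven imaginary octonion units are skew-symmetric endomorphisms of R^8 = O that square to −Id and pairwise anticommute; consequently, applied to the outward unit normal they give 7 orthonormal tangent vector fields on S^7, and their diagonal extensions give 7 orthonormal tangent vector fields on S^{8n−1} for every n. -/
open Matrix

/-! ### Auxiliary lemmas -/

theorem cd_inner_neg : ∀ {n : ℕ} (a b : CD n), CD.inner (CD.neg a) b = -(CD.inner a b)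
  | 0, a, b => by simp [CD.inner, CD.neg, CD.ofReal, CD.toReal]; exact neg_mul (α := ℝ) a b
  | n+1, a, b => by
      simp [CD.inner, CD.neg, cd_inner_neg a.1 b.1, cd_inner_neg a.2 b.2]; ring

theorem ob0 : octBasis 0 = r8 1 0 0 0 0 0 0 0 := rfl
theorem ob1 : octBasis 1 = r8 0 1 0 0 0 0 0 0 := rfl
theorem ob2 : octBasis 2 = r8 0 0 1 0 0 0 0 0 := rfl
theorem ob3 : octBasis 3 = r8 0 0 0 1 0 0 0 0 := rfl
theorem ob4 : octBasis 4 = r8 0 0 0 0 1 0 0 0 := rfl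
theorem ob5 : octBasis 5 = r8 0 0 0 0 0 1 0 0 := rfl
theorem ob6 : octBasis 6 = r8 0 0 0 0 0 0 1 0 := rfl
theorem ob7 : octBasis 7 = r8 0 0 0 0 0 0 0 1 := rfl

theorem innerBB : ∀ r s : Fin 8, CD.inner (octBasis r) (octBasis s) = if r = s then 1 else 0 := by
  have h : ∀ k : Fin 8, octBasis k = r8 (if k = 0 then 1 else 0) (if k = 1 then 1 else 0)
      (if k = 2 then 1 else 0) (if k = 3 then 1 else 0) (if k = 4 then 1 else 0)
      (if k = 5 then 1 else 0) (if k = 6 then 1 else 0) (if k = 7 then 1 else 0) := by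
    intro k; fin_cases k <;> rfl
  intro r s
  rw [h r, h s]
  fin_cases r <;> fin_cases s <;>
    norm_num +decide [r8, r4, r2, CD.inner, CD.ofReal, CD.toReal]

/-! ### The multiplication table -/

theorem mulT10 : CD.mul (octBasis 1) (octBasis 0) = octBasis 1 := by
  norm_num [ob0, ob1, ob2, ob3, ob4, ob5, ob6, ob7, r8, r4, r2, CD.mul, CD.add, CD.sub, CD.neg, CD.conj, CD.ofReal, CD.toReal] <;> rfl

theorem mulT11 : CD.mul (octBasis 1) (octBasis 1) = CD.neg (octBasis 0) := by
  norm_num [ob0, ob1, ob2, ob3, ob4, ob5, ob6, ob7, r8, r4, r2, CD.mul, CD.add, CD.sub, CD.neg, CD.conj, CD.ofReal, CD.toReal] <;> rfl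

theorem mulT12 : CD.mul (octBasis 1) (octBasis 2) = octBasis 3 := by
  norm_num [ob0, ob1, ob2, ob3, ob4, ob5, ob6, ob7, r8, r4, r2, CD.mul, CD.add, CD.sub, CD.neg, CD.conj, CD.ofReal, CD.toReal] <;> rfl

theorem mulT13 : CD.mul (octBasis 1) (octBasis 3) = CD.neg (octBasis 2) := by
  norm_num [ob0, ob1, ob2, ob3, ob4, ob5, ob6, ob7, r8, r4, r2, CD.mul, CD.add, CD.sub, CD.neg, CD.conj, CD.ofReal, CD.toReal] <;> rfl

theorem mulT14 : CD.mul (octBasis 1) (octBasis 4) = octBasis 5 := by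
  norm_num [ob0, ob1, ob2, ob3, ob4, ob5, ob6, ob7, r8, r4, r2, CD.mul, CD.add, CD.sub, CD.neg, CD.conj, CD.ofReal, CD.toReal] <;> rfl

theorem mulT15 : CD.mul (octBasis 1) (octBasis 5) = CD.neg (octBasis 4) := by
  norm_num [ob0, ob1, ob2, ob3, ob4, ob5, ob6, ob7, r8, r4, r2, CD.mul, CD.add, CD.sub, CD.neg, CD.conj, CD.ofReal, CD.toReal] <;> rfl

theorem mulT16 : CD.mul (octBasis 1) (octBasis 6) = CD.neg (octBasis 7) := by
  norm_num [ob0, ob1, ob2, ob3, ob4, ob5, ob6, ob7, r8, r4, r2, CD.mul, CD.add, CD.sub, CD.neg, CD.conj, CD.ofReal, CD.toReal] <;> rfl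

theorem mulT17 : CD.mul (octBasis 1) (octBasis 7) = octBasis 6 := by
  norm_num [ob0, ob1, ob2, ob3, ob4, ob5, ob6, ob7, r8, r4, r2, CD.mul, CD.add, CD.sub, CD.neg, CD.conj, CD.ofReal, CD.toReal] <;> rfl

theorem mulT20 : CD.mul (octBasis 2) (octBasis 0) = octBasis 2 := by
  norm_num [ob0, ob1, ob2, ob3, ob4, ob5, ob6, ob7, r8, r4, r2, CD.mul, CD.add, CD.sub, CD.neg, CD.conj, CD.ofReal, CD.toReal] <;> rfl

theorem mulT21 : CD.mul (octBasis 2) (octBasis 1) = CD.neg (octBasis 3) := by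
  norm_num [ob0, ob1, ob2, ob3, ob4, ob5, ob6, ob7, r8, r4, r2, CD.mul, CD.add, CD.sub, CD.neg, CD.conj, CD.ofReal, CD.toReal] <;> rfl

theorem mulT22 : CD.mul (octBasis 2) (octBasis 2) = CD.neg (octBasis 0) := by
  norm_num [ob0, ob1, ob2, ob3, ob4, ob5, ob6, ob7, r8, r4, r2, CD.mul, CD.add, CD.sub, CD.neg, CD.conj, CD.ofReal, CD.toReal] <;> rfl

theorem mulT23 : CD.mul (octBasis 2) (octBasis 3) = octBasis 1 := by
  norm_num [ob0, ob1, ob2, ob3, ob4, ob5, ob6, ob7, r8, r4, r2, CD.mul, CD.add, CD.sub, CD.neg, CD.conj, CD.ofReal, CD.toReal] <;> rfl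

theorem mulT24 : CD.mul (octBasis 2) (octBasis 4) = octBasis 6 := by
  norm_num [ob0, ob1, ob2, ob3, ob4, ob5, ob6, ob7, r8, r4, r2, CD.mul, CD.add, CD.sub, CD.neg, CD.conj, CD.ofReal, CD.toReal] <;> rfl

theorem mulT25 : CD.mul (octBasis 2) (octBasis 5) = octBasis 7 := by
  norm_num [ob0, ob1, ob2, ob3, ob4, ob5, ob6, ob7, r8, r4, r2, CD.mul, CD.add, CD.sub, CD.neg, CD.conj, CD.ofReal, CD.toReal] <;> rfl

theorem mulT26 : CD.mul (octBasis 2) (octBasis 6) = CD.neg (octBasis 4) := by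
  norm_num [ob0, ob1, ob2, ob3, ob4, ob5, ob6, ob7, r8, r4, r2, CD.mul, CD.add, CD.sub, CD.neg, CD.conj, CD.ofReal, CD.toReal] <;> rfl

theorem mulT27 : CD.mul (octBasis 2) (octBasis 7) = CD.neg (octBasis 5) := by
  norm_num [ob0, ob1, ob2, ob3, ob4, ob5, ob6, ob7, r8, r4, r2, CD.mul, CD.add, CD.sub, CD.neg, CD.conj, CD.ofReal, CD.toReal] <;> rfl

theorem mulT30 : CD.mul (octBasis 3) (octBasis 0) = octBasis 3 := by
  norm_num [ob0, ob1, ob2, ob3, ob4, ob5, ob6, ob7, r8, r4, r2, CD.mul, CD.add, CD.sub, CD.neg, CD.conj, CD.ofReal, CD.toReal] <;> rfl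

theorem mulT31 : CD.mul (octBasis 3) (octBasis 1) = octBasis 2 := by
  norm_num [ob0, ob1, ob2, ob3, ob4, ob5, ob6, ob7, r8, r4, r2, CD.mul, CD.add, CD.sub, CD.neg, CD.conj, CD.ofReal, CD.toReal] <;> rfl

theorem mulT32 : CD.mul (octBasis 3) (octBasis 2) = CD.neg (octBasis 1) := by
  norm_num [ob0, ob1, ob2, ob3, ob4, ob5, ob6, ob7, r8, r4, r2, CD.mul, CD.add, CD.sub, CD.neg, CD.conj, CD.ofReal, CD.toReal] <;> rfl

theorem mulT33 : CD.mul (octBasis 3) (octBasis 3) = CD.neg (octBasis 0) := by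
  norm_num [ob0, ob1, ob2, ob3, ob4, ob5, ob6, ob7, r8, r4, r2, CD.mul, CD.add, CD.sub, CD.neg, CD.conj, CD.ofReal, CD.toReal] <;> rfl

theorem mulT34 : CD.mul (octBasis 3) (octBasis 4) = octBasis 7 := by
  norm_num [ob0, ob1, ob2, ob3, ob4, ob5, ob6, ob7, r8, r4, r2, CD.mul, CD.add, CD.sub, CD.neg, CD.conj, CD.ofReal, CD.toReal] <;> rfl

theorem mulT35 : CD.mul (octBasis 3) (octBasis 5) = CD.neg (octBasis 6) := by
  norm_num [ob0, ob1, ob2, ob3, ob4, ob5, ob6, ob7, r8, r4, r2, CD.mul, CD.add, CD.sub, CD.neg, CD.conj, CD.ofReal, CD.toReal] <;> rfl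

theorem mulT36 : CD.mul (octBasis 3) (octBasis 6) = octBasis 5 := by
  norm_num [ob0, ob1, ob2, ob3, ob4, ob5, ob6, ob7, r8, r4, r2, CD.mul, CD.add, CD.sub, CD.neg, CD.conj, CD.ofReal, CD.toReal] <;> rfl

theorem mulT37 : CD.mul (octBasis 3) (octBasis 7) = CD.neg (octBasis 4) := by
  norm_num [ob0, ob1, ob2, ob3, ob4, ob5, ob6, ob7, r8, r4, r2, CD.mul, CD.add, CD.sub, CD.neg, CD.conj, CD.ofReal, CD.toReal] <;> rfl

theorem mulT40 : CD.mul (octBasis 4) (octBasis 0) = octBasis 4 := by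
  norm_num [ob0, ob1, ob2, ob3, ob4, ob5, ob6, ob7, r8, r4, r2, CD.mul, CD.add, CD.sub, CD.neg, CD.conj, CD.ofReal, CD.toReal] <;> rfl

theorem mulT41 : CD.mul (octBasis 4) (octBasis 1) = CD.neg (octBasis 5) := by
  norm_num [ob0, ob1, ob2, ob3, ob4, ob5, ob6, ob7, r8, r4, r2, CD.mul, CD.add, CD.sub, CD.neg, CD.conj, CD.ofReal, CD.toReal] <;> rfl

theorem mulT42 : CD.mul (octBasis 4) (octBasis 2) = CD.neg (octBasis 6) := by
  norm_num [ob0, ob1, ob2, ob3, ob4, ob5, ob6, ob7, r8, r4, r2, CD.mul, CD.add, CD.sub, CD.neg, CD.conj, CD.ofReal, CD.toReal] <;> rfl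

theorem mulT43 : CD.mul (octBasis 4) (octBasis 3) = CD.neg (octBasis 7) := by
  norm_num [ob0, ob1, ob2, ob3, ob4, ob5, ob6, ob7, r8, r4, r2, CD.mul, CD.add, CD.sub, CD.neg, CD.conj, CD.ofReal, CD.toReal] <;> rfl

theorem mulT44 : CD.mul (octBasis 4) (octBasis 4) = CD.neg (octBasis 0) := by
  norm_num [ob0, ob1, ob2, ob3, ob4, ob5, ob6, ob7, r8, r4, r2, CD.mul, CD.add, CD.sub, CD.neg, CD.conj, CD.ofReal, CD.toReal] <;> rfl

theorem mulT45 : CD.mul (octBasis 4) (octBasis 5) = octBasis 1 := by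
  norm_num [ob0, ob1, ob2, ob3, ob4, ob5, ob6, ob7, r8, r4, r2, CD.mul, CD.add, CD.sub, CD.neg, CD.conj, CD.ofReal, CD.toReal] <;> rfl

theorem mulT46 : CD.mul (octBasis 4) (octBasis 6) = octBasis 2 := by
  norm_num [ob0, ob1, ob2, ob3, ob4, ob5, ob6, ob7, r8, r4, r2, CD.mul, CD.add, CD.sub, CD.neg, CD.conj, CD.ofReal, CD.toReal] <;> rfl

theorem mulT47 : CD.mul (octBasis 4) (octBasis 7) = octBasis 3 := by
  norm_num [ob0, ob1, ob2, ob3, ob4, ob5, ob6, ob7, r8, r4, r2, CD.mul, CD.add, CD.sub, CD.neg, CD.conj, CD.ofReal, CD.toReal] <;> rfl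

theorem mulT50 : CD.mul (octBasis 5) (octBasis 0) = octBasis 5 := by
  norm_num [ob0, ob1, ob2, ob3, ob4, ob5, ob6, ob7, r8, r4, r2, CD.mul, CD.add, CD.sub, CD.neg, CD.conj, CD.ofReal, CD.toReal] <;> rfl

theorem mulT51 : CD.mul (octBasis 5) (octBasis 1) = octBasis 4 := by
  norm_num [ob0, ob1, ob2, ob3, ob4, ob5, ob6, ob7, r8, r4, r2, CD.mul, CD.add, CD.sub, CD.neg, CD.conj, CD.ofReal, CD.toReal] <;> rfl

theorem mulT52 : CD.mul (octBasis 5) (octBasis 2) = CD.neg (octBasis 7) := by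
  norm_num [ob0, ob1, ob2, ob3, ob4, ob5, ob6, ob7, r8, r4, r2, CD.mul, CD.add, CD.sub, CD.neg, CD.conj, CD.ofReal, CD.toReal] <;> rfl

theorem mulT53 : CD.mul (octBasis 5) (octBasis 3) = octBasis 6 := by
  norm_num [ob0, ob1, ob2, ob3, ob4, ob5, ob6, ob7, r8, r4, r2, CD.mul, CD.add, CD.sub, CD.neg, CD.conj, CD.ofReal, CD.toReal] <;> rfl

theorem mulT54 : CD.mul (octBasis 5) (octBasis 4) = CD.neg (octBasis 1) := by
  norm_num [ob0, ob1, ob2, ob3, ob4, ob5, ob6, ob7, r8, r4, r2, CD.mul, CD.add, CD.sub, CD.neg, CD.conj, CD.ofReal, CD.toReal] <;> rfl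

theorem mulT55 : CD.mul (octBasis 5) (octBasis 5) = CD.neg (octBasis 0) := by
  norm_num [ob0, ob1, ob2, ob3, ob4, ob5, ob6, ob7, r8, r4, r2, CD.mul, CD.add, CD.sub, CD.neg, CD.conj, CD.ofReal, CD.toReal] <;> rfl

theorem mulT56 : CD.mul (octBasis 5) (octBasis 6) = CD.neg (octBasis 3) := by
  norm_num [ob0, ob1, ob2, ob3, ob4, ob5, ob6, ob7, r8, r4, r2, CD.mul, CD.add, CD.sub, CD.neg, CD.conj, CD.ofReal, CD.toReal] <;> rfl

theorem mulT57 : CD.mul (octBasis 5) (octBasis 7) = octBasis 2 := by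
  norm_num [ob0, ob1, ob2, ob3, ob4, ob5, ob6, ob7, r8, r4, r2, CD.mul, CD.add, CD.sub, CD.neg, CD.conj, CD.ofReal, CD.toReal] <;> rfl

theorem mulT60 : CD.mul (octBasis 6) (octBasis 0) = octBasis 6 := by
  norm_num [ob0, ob1, ob2, ob3, ob4, ob5, ob6, ob7, r8, r4, r2, CD.mul, CD.add, CD.sub, CD.neg, CD.conj, CD.ofReal, CD.toReal] <;> rfl

theorem mulT61 : CD.mul (octBasis 6) (octBasis 1) = octBasis 7 := by
  norm_num [ob0, ob1, ob2, ob3, ob4, ob5, ob6, ob7, r8, r4, r2, CD.mul, CD.add, CD.sub, CD.neg, CD.conj, CD.ofReal, CD.toReal] <;> rfl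

theorem mulT62 : CD.mul (octBasis 6) (octBasis 2) = octBasis 4 := by
  norm_num [ob0, ob1, ob2, ob3, ob4, ob5, ob6, ob7, r8, r4, r2, CD.mul, CD.add, CD.sub, CD.neg, CD.conj, CD.ofReal, CD.toReal] <;> rfl

theorem mulT63 : CD.mul (octBasis 6) (octBasis 3) = CD.neg (octBasis 5) := by
  norm_num [ob0, ob1, ob2, ob3, ob4, ob5, ob6, ob7, r8, r4, r2, CD.mul, CD.add, CD.sub, CD.neg, CD.conj, CD.ofReal, CD.toReal] <;> rfl

theorem mulT64 : CD.mul (octBasis 6) (octBasis 4) = CD.neg (octBasis 2) := by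
  norm_num [ob0, ob1, ob2, ob3, ob4, ob5, ob6, ob7, r8, r4, r2, CD.mul, CD.add, CD.sub, CD.neg, CD.conj, CD.ofReal, CD.toReal] <;> rfl

theorem mulT65 : CD.mul (octBasis 6) (octBasis 5) = octBasis 3 := by
  norm_num [ob0, ob1, ob2, ob3, ob4, ob5, ob6, ob7, r8, r4, r2, CD.mul, CD.add, CD.sub, CD.neg, CD.conj, CD.ofReal, CD.toReal] <;> rfl

theorem mulT66 : CD.mul (octBasis 6) (octBasis 6) = CD.neg (octBasis 0) := by
  norm_num [ob0, ob1, ob2, ob3, ob4, ob5, ob6, ob7, r8, r4, r2, CD.mul, CD.add, CD.sub, CD.neg, CD.conj, CD.ofReal, CD.toReal] <;> rfl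

theorem mulT67 : CD.mul (octBasis 6) (octBasis 7) = CD.neg (octBasis 1) := by
  norm_num [ob0, ob1, ob2, ob3, ob4, ob5, ob6, ob7, r8, r4, r2, CD.mul, CD.add, CD.sub, CD.neg, CD.conj, CD.ofReal, CD.toReal] <;> rfl

theorem mulT70 : CD.mul (octBasis 7) (octBasis 0) = octBasis 7 := by
  norm_num [ob0, ob1, ob2, ob3, ob4, ob5, ob6, ob7, r8, r4, r2, CD.mul, CD.add, CD.sub, CD.neg, CD.conj, CD.ofReal, CD.toReal] <;> rfl

theorem mulT71 : CD.mul (octBasis 7) (octBasis 1) = CD.neg (octBasis 6) := by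
  norm_num [ob0, ob1, ob2, ob3, ob4, ob5, ob6, ob7, r8, r4, r2, CD.mul, CD.add, CD.sub, CD.neg, CD.conj, CD.ofReal, CD.toReal] <;> rfl

theorem mulT72 : CD.mul (octBasis 7) (octBasis 2) = octBasis 5 := by
  norm_num [ob0, ob1, ob2, ob3, ob4, ob5, ob6, ob7, r8, r4, r2, CD.mul, CD.add, CD.sub, CD.neg, CD.conj, CD.ofReal, CD.toReal] <;> rfl

theorem mulT73 : CD.mul (octBasis 7) (octBasis 3) = octBasis 4 := by
  norm_num [ob0, ob1, ob2, ob3, ob4, ob5, ob6, ob7, r8, r4, r2, CD.mul, CD.add, CD.sub, CD.neg, CD.conj, CD.ofReal, CD.toReal] <;> rfl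

theorem mulT74 : CD.mul (octBasis 7) (octBasis 4) = CD.neg (octBasis 3) := by
  norm_num [ob0, ob1, ob2, ob3, ob4, ob5, ob6, ob7, r8, r4, r2, CD.mul, CD.add, CD.sub, CD.neg, CD.conj, CD.ofReal, CD.toReal] <;> rfl

theorem mulT75 : CD.mul (octBasis 7) (octBasis 5) = CD.neg (octBasis 2) := by
  norm_num [ob0, ob1, ob2, ob3, ob4, ob5, ob6, ob7, r8, r4, r2, CD.mul, CD.add, CD.sub, CD.neg, CD.conj, CD.ofReal, CD.toReal] <;> rfl

theorem mulT76 : CD.mul (octBasis 7) (octBasis 6) = octBasis 1 := by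
  norm_num [ob0, ob1, ob2, ob3, ob4, ob5, ob6, ob7, r8, r4, r2, CD.mul, CD.add, CD.sub, CD.neg, CD.conj, CD.ofReal, CD.toReal] <;> rfl

theorem mulT77 : CD.mul (octBasis 7) (octBasis 7) = CD.neg (octBasis 0) := by
  norm_num [ob0, ob1, ob2, ob3, ob4, ob5, ob6, ob7, r8, r4, r2, CD.mul, CD.add, CD.sub, CD.neg, CD.conj, CD.ofReal, CD.toReal] <;> rfl

theorem fm0 (h : (0:ℕ) < 8) : (⟨0, h⟩ : Fin 8) = 0 := rfl
theorem fm1 (h : (1:ℕ) < 8) : (⟨1, h⟩ : Fin 8) = 1 := rfl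
theorem fm2 (h : (2:ℕ) < 8) : (⟨2, h⟩ : Fin 8) = 2 := rfl
theorem fm3 (h : (3:ℕ) < 8) : (⟨3, h⟩ : Fin 8) = 3 := rfl
theorem fm4 (h : (4:ℕ) < 8) : (⟨4, h⟩ : Fin 8) = 4 := rfl
theorem fm5 (h : (5:ℕ) < 8) : (⟨5, h⟩ : Fin 8) = 5 := rfl
theorem fm6 (h : (6:ℕ) < 8) : (⟨6, h⟩ : Fin 8) = 6 := rfl
theorem fm7 (h : (7:ℕ) < 8) : (⟨7, h⟩ : Fin 8) = 7 := rfl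
def LMi : Fin 8 → Matrix (Fin 8) (Fin 8) ℤ :=
  ![1,
  !![0, -1, 0, 0, 0, 0, 0, 0; 1, 0, 0, 0, 0, 0, 0, 0; 0, 0, 0, -1, 0, 0, 0, 0; 0, 0, 1, 0, 0, 0, 0, 0; 0, 0, 0, 0, 0, -1, 0, 0; 0, 0, 0, 0, 1, 0, 0, 0; 0, 0, 0, 0, 0, 0, 0, 1; 0, 0, 0, 0, 0, 0, -1, 0],
  !![0, 0, -1, 0, 0, 0, 0, 0; 0, 0, 0, 1, 0, 0, 0, 0; 1, 0, 0, 0, 0, 0, 0, 0; 0, -1, 0, 0, 0, 0, 0, 0; 0, 0, 0, 0, 0, 0, -1, 0; 0, 0, 0, 0, 0, 0, 0, -1; 0, 0, 0, 0, 1, 0, 0, 0; 0, 0, 0, 0, 0, 1, 0, 0],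
  !![0, 0, 0, -1, 0, 0, 0, 0; 0, 0, -1, 0, 0, 0, 0, 0; 0, 1, 0, 0, 0, 0, 0, 0; 1, 0, 0, 0, 0, 0, 0, 0; 0, 0, 0, 0, 0, 0, 0, -1; 0, 0, 0, 0, 0, 0, 1, 0; 0, 0, 0, 0, 0, -1, 0, 0; 0, 0, 0, 0, 1, 0, 0, 0],
  !![0, 0, 0, 0, -1, 0, 0, 0; 0, 0, 0, 0, 0, 1, 0, 0; 0, 0, 0, 0, 0, 0, 1, 0; 0, 0, 0, 0, 0, 0, 0, 1; 1, 0, 0, 0, 0, 0, 0, 0; 0, -1, 0, 0, 0, 0, 0, 0; 0, 0, -1, 0, 0, 0, 0, 0; 0, 0, 0, -1, 0, 0, 0, 0],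
  !![0, 0, 0, 0, 0, -1, 0, 0; 0, 0, 0, 0, -1, 0, 0, 0; 0, 0, 0, 0, 0, 0, 0, 1; 0, 0, 0, 0, 0, 0, -1, 0; 0, 1, 0, 0, 0, 0, 0, 0; 1, 0, 0, 0, 0, 0, 0, 0; 0, 0, 0, 1, 0, 0, 0, 0; 0, 0, -1, 0, 0, 0, 0, 0],
  !![0, 0, 0, 0, 0, 0, -1, 0; 0, 0, 0, 0, 0, 0, 0, -1; 0, 0, 0, 0, -1, 0, 0, 0; 0, 0, 0, 0, 0, 1, 0, 0; 0, 0, 1, 0, 0, 0, 0, 0; 0, 0, 0, -1, 0, 0, 0, 0; 1, 0, 0, 0, 0, 0, 0, 0; 0, 1, 0, 0, 0, 0, 0, 0],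
  !![0, 0, 0, 0, 0, 0, 0, -1; 0, 0, 0, 0, 0, 0, 1, 0; 0, 0, 0, 0, 0, -1, 0, 0; 0, 0, 0, 0, -1, 0, 0, 0; 0, 0, 0, 1, 0, 0, 0, 0; 0, 0, 1, 0, 0, 0, 0, 0; 0, -1, 0, 0, 0, 0, 0, 0; 1, 0, 0, 0, 0, 0, 0, 0]]

set_option maxHeartbeats 1000000 in
theorem LmatE1 : Lmat (octBasis 1) = (LMi 1).map Int.cast := by
  have h0 : ∀ r : Fin 8, LMi 1 r 0 = if (1 : Fin 8) = r then 1 else 0 := by decide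
  have h1 : ∀ r : Fin 8, LMi 1 r 1 = if (0 : Fin 8) = r then -1 else 0 := by decide
  have h2 : ∀ r : Fin 8, LMi 1 r 2 = if (3 : Fin 8) = r then 1 else 0 := by decide
  have h3 : ∀ r : Fin 8, LMi 1 r 3 = if (2 : Fin 8) = r then -1 else 0 := by decide
  have h4 : ∀ r : Fin 8, LMi 1 r 4 = if (5 : Fin 8) = r then 1 else 0 := by decide
  have h5 : ∀ r : Fin 8, LMi 1 r 5 = if (4 : Fin 8) = r then -1 else 0 := by decide
  have h6 : ∀ r : Fin 8, LMi 1 r 6 = if (7 : Fin 8) = r then -1 else 0 := by decide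
  have h7 : ∀ r : Fin 8, LMi 1 r 7 = if (6 : Fin 8) = r then 1 else 0 := by decide
  ext r c
  fin_cases c
  · simp only [fm0, fm1, fm2, fm3, fm4, fm5, fm6, fm7, Lmat, Matrix.of_apply,
      Matrix.map_apply, mulT10, cd_inner_neg, innerBB, h0]
    by_cases h : (1 : Fin 8) = r <;> simp [h]
  · simp only [fm0, fm1, fm2, fm3, fm4, fm5, fm6, fm7, Lmat, Matrix.of_apply,
      Matrix.map_apply, mulT11, cd_inner_neg, innerBB, h1]
    by_cases h : (0 : Fin 8) = r <;> simp [h]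
  · simp only [fm0, fm1, fm2, fm3, fm4, fm5, fm6, fm7, Lmat, Matrix.of_apply,
      Matrix.map_apply, mulT12, cd_inner_neg, innerBB, h2]
    by_cases h : (3 : Fin 8) = r <;> simp [h]
  · simp only [fm0, fm1, fm2, fm3, fm4, fm5, fm6, fm7, Lmat, Matrix.of_apply,
      Matrix.map_apply, mulT13, cd_inner_neg, innerBB, h3]
    by_cases h : (2 : Fin 8) = r <;> simp [h]
  · simp only [fm0, fm1, fm2, fm3, fm4, fm5, fm6, fm7, Lmat, Matrix.of_apply,
      Matrix.map_apply, mulT14, cd_inner_neg, innerBB, h4]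
    by_cases h : (5 : Fin 8) = r <;> simp [h]
  · simp only [fm0, fm1, fm2, fm3, fm4, fm5, fm6, fm7, Lmat, Matrix.of_apply,
      Matrix.map_apply, mulT15, cd_inner_neg, innerBB, h5]
    by_cases h : (4 : Fin 8) = r <;> simp [h]
  · simp only [fm0, fm1, fm2, fm3, fm4, fm5, fm6, fm7, Lmat, Matrix.of_apply,
      Matrix.map_apply, mulT16, cd_inner_neg, innerBB, h6]
    by_cases h : (7 : Fin 8) = r <;> simp [h]
  · simp only [fm0, fm1, fm2, fm3, fm4, fm5, fm6, fm7, Lmat, Matrix.of_apply,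
      Matrix.map_apply, mulT17, cd_inner_neg, innerBB, h7]
    by_cases h : (6 : Fin 8) = r <;> simp [h]

set_option maxHeartbeats 1000000 in
theorem LmatE2 : Lmat (octBasis 2) = (LMi 2).map Int.cast := by
  have h0 : ∀ r : Fin 8, LMi 2 r 0 = if (2 : Fin 8) = r then 1 else 0 := by decide
  have h1 : ∀ r : Fin 8, LMi 2 r 1 = if (3 : Fin 8) = r then -1 else 0 := by decide
  have h2 : ∀ r : Fin 8, LMi 2 r 2 = if (0 : Fin 8) = r then -1 else 0 := by decide
  have h3 : ∀ r : Fin 8, LMi 2 r 3 = if (1 : Fin 8) = r then 1 else 0 := by decide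
  have h4 : ∀ r : Fin 8, LMi 2 r 4 = if (6 : Fin 8) = r then 1 else 0 := by decide
  have h5 : ∀ r : Fin 8, LMi 2 r 5 = if (7 : Fin 8) = r then 1 else 0 := by decide
  have h6 : ∀ r : Fin 8, LMi 2 r 6 = if (4 : Fin 8) = r then -1 else 0 := by decide
  have h7 : ∀ r : Fin 8, LMi 2 r 7 = if (5 : Fin 8) = r then -1 else 0 := by decide
  ext r c
  fin_cases c
  · simp only [fm0, fm1, fm2, fm3, fm4, fm5, fm6, fm7, Lmat, Matrix.of_apply,
      Matrix.map_apply, mulT20, cd_inner_neg, innerBB, h0]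
    by_cases h : (2 : Fin 8) = r <;> simp [h]
  · simp only [fm0, fm1, fm2, fm3, fm4, fm5, fm6, fm7, Lmat, Matrix.of_apply,
      Matrix.map_apply, mulT21, cd_inner_neg, innerBB, h1]
    by_cases h : (3 : Fin 8) = r <;> simp [h]
  · simp only [fm0, fm1, fm2, fm3, fm4, fm5, fm6, fm7, Lmat, Matrix.of_apply,
      Matrix.map_apply, mulT22, cd_inner_neg, innerBB, h2]
    by_cases h : (0 : Fin 8) = r <;> simp [h]
  · simp only [fm0, fm1, fm2, fm3, fm4, fm5, fm6, fm7, Lmat, Matrix.of_apply,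
      Matrix.map_apply, mulT23, cd_inner_neg, innerBB, h3]
    by_cases h : (1 : Fin 8) = r <;> simp [h]
  · simp only [fm0, fm1, fm2, fm3, fm4, fm5, fm6, fm7, Lmat, Matrix.of_apply,
      Matrix.map_apply, mulT24, cd_inner_neg, innerBB, h4]
    by_cases h : (6 : Fin 8) = r <;> simp [h]
  · simp only [fm0, fm1, fm2, fm3, fm4, fm5, fm6, fm7, Lmat, Matrix.of_apply,
      Matrix.map_apply, mulT25, cd_inner_neg, innerBB, h5]
    by_cases h : (7 : Fin 8) = r <;> simp [h]
  · simp only [fm0, fm1, fm2, fm3, fm4, fm5, fm6, fm7, Lmat, Matrix.of_apply,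
      Matrix.map_apply, mulT26, cd_inner_neg, innerBB, h6]
    by_cases h : (4 : Fin 8) = r <;> simp [h]
  · simp only [fm0, fm1, fm2, fm3, fm4, fm5, fm6, fm7, Lmat, Matrix.of_apply,
      Matrix.map_apply, mulT27, cd_inner_neg, innerBB, h7]
    by_cases h : (5 : Fin 8) = r <;> simp [h]

set_option maxHeartbeats 1000000 in
theorem LmatE3 : Lmat (octBasis 3) = (LMi 3).map Int.cast := by
  have h0 : ∀ r : Fin 8, LMi 3 r 0 = if (3 : Fin 8) = r then 1 else 0 := by decide
  have h1 : ∀ r : Fin 8, LMi 3 r 1 = if (2 : Fin 8) = r then 1 else 0 := by decide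
  have h2 : ∀ r : Fin 8, LMi 3 r 2 = if (1 : Fin 8) = r then -1 else 0 := by decide
  have h3 : ∀ r : Fin 8, LMi 3 r 3 = if (0 : Fin 8) = r then -1 else 0 := by decide
  have h4 : ∀ r : Fin 8, LMi 3 r 4 = if (7 : Fin 8) = r then 1 else 0 := by decide
  have h5 : ∀ r : Fin 8, LMi 3 r 5 = if (6 : Fin 8) = r then -1 else 0 := by decide
  have h6 : ∀ r : Fin 8, LMi 3 r 6 = if (5 : Fin 8) = r then 1 else 0 := by decide
  have h7 : ∀ r : Fin 8, LMi 3 r 7 = if (4 : Fin 8) = r then -1 else 0 := by decide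
  ext r c
  fin_cases c
  · simp only [fm0, fm1, fm2, fm3, fm4, fm5, fm6, fm7, Lmat, Matrix.of_apply,
      Matrix.map_apply, mulT30, cd_inner_neg, innerBB, h0]
    by_cases h : (3 : Fin 8) = r <;> simp [h]
  · simp only [fm0, fm1, fm2, fm3, fm4, fm5, fm6, fm7, Lmat, Matrix.of_apply,
      Matrix.map_apply, mulT31, cd_inner_neg, innerBB, h1]
    by_cases h : (2 : Fin 8) = r <;> simp [h]
  · simp only [fm0, fm1, fm2, fm3, fm4, fm5, fm6, fm7, Lmat, Matrix.of_apply,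
      Matrix.map_apply, mulT32, cd_inner_neg, innerBB, h2]
    by_cases h : (1 : Fin 8) = r <;> simp [h]
  · simp only [fm0, fm1, fm2, fm3, fm4, fm5, fm6, fm7, Lmat, Matrix.of_apply,
      Matrix.map_apply, mulT33, cd_inner_neg, innerBB, h3]
    by_cases h : (0 : Fin 8) = r <;> simp [h]
  · simp only [fm0, fm1, fm2, fm3, fm4, fm5, fm6, fm7, Lmat, Matrix.of_apply,
      Matrix.map_apply, mulT34, cd_inner_neg, innerBB, h4]
    by_cases h : (7 : Fin 8) = r <;> simp [h]
  · simp only [fm0, fm1, fm2, fm3, fm4, fm5, fm6, fm7, Lmat, Matrix.of_apply,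
      Matrix.map_apply, mulT35, cd_inner_neg, innerBB, h5]
    by_cases h : (6 : Fin 8) = r <;> simp [h]
  · simp only [fm0, fm1, fm2, fm3, fm4, fm5, fm6, fm7, Lmat, Matrix.of_apply,
      Matrix.map_apply, mulT36, cd_inner_neg, innerBB, h6]
    by_cases h : (5 : Fin 8) = r <;> simp [h]
  · simp only [fm0, fm1, fm2, fm3, fm4, fm5, fm6, fm7, Lmat, Matrix.of_apply,
      Matrix.map_apply, mulT37, cd_inner_neg, innerBB, h7]
    by_cases h : (4 : Fin 8) = r <;> simp [h]

set_option maxHeartbeats 1000000 in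
theorem LmatE4 : Lmat (octBasis 4) = (LMi 4).map Int.cast := by
  have h0 : ∀ r : Fin 8, LMi 4 r 0 = if (4 : Fin 8) = r then 1 else 0 := by decide
  have h1 : ∀ r : Fin 8, LMi 4 r 1 = if (5 : Fin 8) = r then -1 else 0 := by decide
  have h2 : ∀ r : Fin 8, LMi 4 r 2 = if (6 : Fin 8) = r then -1 else 0 := by decide
  have h3 : ∀ r : Fin 8, LMi 4 r 3 = if (7 : Fin 8) = r then -1 else 0 := by decide
  have h4 : ∀ r : Fin 8, LMi 4 r 4 = if (0 : Fin 8) = r then -1 else 0 := by decide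
  have h5 : ∀ r : Fin 8, LMi 4 r 5 = if (1 : Fin 8) = r then 1 else 0 := by decide
  have h6 : ∀ r : Fin 8, LMi 4 r 6 = if (2 : Fin 8) = r then 1 else 0 := by decide
  have h7 : ∀ r : Fin 8, LMi 4 r 7 = if (3 : Fin 8) = r then 1 else 0 := by decide
  ext r c
  fin_cases c
  · simp only [fm0, fm1, fm2, fm3, fm4, fm5, fm6, fm7, Lmat, Matrix.of_apply,
      Matrix.map_apply, mulT40, cd_inner_neg, innerBB, h0]
    by_cases h : (4 : Fin 8) = r <;> simp [h]
  · simp only [fm0, fm1, fm2, fm3, fm4, fm5, fm6, fm7, Lmat, Matrix.of_apply,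
      Matrix.map_apply, mulT41, cd_inner_neg, innerBB, h1]
    by_cases h : (5 : Fin 8) = r <;> simp [h]
  · simp only [fm0, fm1, fm2, fm3, fm4, fm5, fm6, fm7, Lmat, Matrix.of_apply,
      Matrix.map_apply, mulT42, cd_inner_neg, innerBB, h2]
    by_cases h : (6 : Fin 8) = r <;> simp [h]
  · simp only [fm0, fm1, fm2, fm3, fm4, fm5, fm6, fm7, Lmat, Matrix.of_apply,
      Matrix.map_apply, mulT43, cd_inner_neg, innerBB, h3]
    by_cases h : (7 : Fin 8) = r <;> simp [h]
  · simp only [fm0, fm1, fm2, fm3, fm4, fm5, fm6, fm7, Lmat, Matrix.of_apply,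
      Matrix.map_apply, mulT44, cd_inner_neg, innerBB, h4]
    by_cases h : (0 : Fin 8) = r <;> simp [h]
  · simp only [fm0, fm1, fm2, fm3, fm4, fm5, fm6, fm7, Lmat, Matrix.of_apply,
      Matrix.map_apply, mulT45, cd_inner_neg, innerBB, h5]
    by_cases h : (1 : Fin 8) = r <;> simp [h]
  · simp only [fm0, fm1, fm2, fm3, fm4, fm5, fm6, fm7, Lmat, Matrix.of_apply,
      Matrix.map_apply, mulT46, cd_inner_neg, innerBB, h6]
    by_cases h : (2 : Fin 8) = r <;> simp [h]
  · simp only [fm0, fm1, fm2, fm3, fm4, fm5, fm6, fm7, Lmat, Matrix.of_apply,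
      Matrix.map_apply, mulT47, cd_inner_neg, innerBB, h7]
    by_cases h : (3 : Fin 8) = r <;> simp [h]

set_option maxHeartbeats 1000000 in
theorem LmatE5 : Lmat (octBasis 5) = (LMi 5).map Int.cast := by
  have h0 : ∀ r : Fin 8, LMi 5 r 0 = if (5 : Fin 8) = r then 1 else 0 := by decide
  have h1 : ∀ r : Fin 8, LMi 5 r 1 = if (4 : Fin 8) = r then 1 else 0 := by decide
  have h2 : ∀ r : Fin 8, LMi 5 r 2 = if (7 : Fin 8) = r then -1 else 0 := by decide
  have h3 : ∀ r : Fin 8, LMi 5 r 3 = if (6 : Fin 8) = r then 1 else 0 := by decide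
  have h4 : ∀ r : Fin 8, LMi 5 r 4 = if (1 : Fin 8) = r then -1 else 0 := by decide
  have h5 : ∀ r : Fin 8, LMi 5 r 5 = if (0 : Fin 8) = r then -1 else 0 := by decide
  have h6 : ∀ r : Fin 8, LMi 5 r 6 = if (3 : Fin 8) = r then -1 else 0 := by decide
  have h7 : ∀ r : Fin 8, LMi 5 r 7 = if (2 : Fin 8) = r then 1 else 0 := by decide
  ext r c
  fin_cases c
  · simp only [fm0, fm1, fm2, fm3, fm4, fm5, fm6, fm7, Lmat, Matrix.of_apply,
      Matrix.map_apply, mulT50, cd_inner_neg, innerBB, h0]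
    by_cases h : (5 : Fin 8) = r <;> simp [h]
  · simp only [fm0, fm1, fm2, fm3, fm4, fm5, fm6, fm7, Lmat, Matrix.of_apply,
      Matrix.map_apply, mulT51, cd_inner_neg, innerBB, h1]
    by_cases h : (4 : Fin 8) = r <;> simp [h]
  · simp only [fm0, fm1, fm2, fm3, fm4, fm5, fm6, fm7, Lmat, Matrix.of_apply,
      Matrix.map_apply, mulT52, cd_inner_neg, innerBB, h2]
    by_cases h : (7 : Fin 8) = r <;> simp [h]
  · simp only [fm0, fm1, fm2, fm3, fm4, fm5, fm6, fm7, Lmat, Matrix.of_apply,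
      Matrix.map_apply, mulT53, cd_inner_neg, innerBB, h3]
    by_cases h : (6 : Fin 8) = r <;> simp [h]
  · simp only [fm0, fm1, fm2, fm3, fm4, fm5, fm6, fm7, Lmat, Matrix.of_apply,
      Matrix.map_apply, mulT54, cd_inner_neg, innerBB, h4]
    by_cases h : (1 : Fin 8) = r <;> simp [h]
  · simp only [fm0, fm1, fm2, fm3, fm4, fm5, fm6, fm7, Lmat, Matrix.of_apply,
      Matrix.map_apply, mulT55, cd_inner_neg, innerBB, h5]
    by_cases h : (0 : Fin 8) = r <;> simp [h]
  · simp only [fm0, fm1, fm2, fm3, fm4, fm5, fm6, fm7, Lmat, Matrix.of_apply,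
      Matrix.map_apply, mulT56, cd_inner_neg, innerBB, h6]
    by_cases h : (3 : Fin 8) = r <;> simp [h]
  · simp only [fm0, fm1, fm2, fm3, fm4, fm5, fm6, fm7, Lmat, Matrix.of_apply,
      Matrix.map_apply, mulT57, cd_inner_neg, innerBB, h7]
    by_cases h : (2 : Fin 8) = r <;> simp [h]

set_option maxHeartbeats 1000000 in
theorem LmatE6 : Lmat (octBasis 6) = (LMi 6).map Int.cast := by
  have h0 : ∀ r : Fin 8, LMi 6 r 0 = if (6 : Fin 8) = r then 1 else 0 := by decide
  have h1 : ∀ r : Fin 8, LMi 6 r 1 = if (7 : Fin 8) = r then 1 else 0 := by decide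
  have h2 : ∀ r : Fin 8, LMi 6 r 2 = if (4 : Fin 8) = r then 1 else 0 := by decide
  have h3 : ∀ r : Fin 8, LMi 6 r 3 = if (5 : Fin 8) = r then -1 else 0 := by decide
  have h4 : ∀ r : Fin 8, LMi 6 r 4 = if (2 : Fin 8) = r then -1 else 0 := by decide
  have h5 : ∀ r : Fin 8, LMi 6 r 5 = if (3 : Fin 8) = r then 1 else 0 := by decide
  have h6 : ∀ r : Fin 8, LMi 6 r 6 = if (0 : Fin 8) = r then -1 else 0 := by decide
  have h7 : ∀ r : Fin 8, LMi 6 r 7 = if (1 : Fin 8) = r then -1 else 0 := by decide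
  ext r c
  fin_cases c
  · simp only [fm0, fm1, fm2, fm3, fm4, fm5, fm6, fm7, Lmat, Matrix.of_apply,
      Matrix.map_apply, mulT60, cd_inner_neg, innerBB, h0]
    by_cases h : (6 : Fin 8) = r <;> simp [h]
  · simp only [fm0, fm1, fm2, fm3, fm4, fm5, fm6, fm7, Lmat, Matrix.of_apply,
      Matrix.map_apply, mulT61, cd_inner_neg, innerBB, h1]
    by_cases h : (7 : Fin 8) = r <;> simp [h]
  · simp only [fm0, fm1, fm2, fm3, fm4, fm5, fm6, fm7, Lmat, Matrix.of_apply,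
      Matrix.map_apply, mulT62, cd_inner_neg, innerBB, h2]
    by_cases h : (4 : Fin 8) = r <;> simp [h]
  · simp only [fm0, fm1, fm2, fm3, fm4, fm5, fm6, fm7, Lmat, Matrix.of_apply,
      Matrix.map_apply, mulT63, cd_inner_neg, innerBB, h3]
    by_cases h : (5 : Fin 8) = r <;> simp [h]
  · simp only [fm0, fm1, fm2, fm3, fm4, fm5, fm6, fm7, Lmat, Matrix.of_apply,
      Matrix.map_apply, mulT64, cd_inner_neg, innerBB, h4]
    by_cases h : (2 : Fin 8) = r <;> simp [h]
  · simp only [fm0, fm1, fm2, fm3, fm4, fm5, fm6, fm7, Lmat, Matrix.of_apply,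
      Matrix.map_apply, mulT65, cd_inner_neg, innerBB, h5]
    by_cases h : (3 : Fin 8) = r <;> simp [h]
  · simp only [fm0, fm1, fm2, fm3, fm4, fm5, fm6, fm7, Lmat, Matrix.of_apply,
      Matrix.map_apply, mulT66, cd_inner_neg, innerBB, h6]
    by_cases h : (0 : Fin 8) = r <;> simp [h]
  · simp only [fm0, fm1, fm2, fm3, fm4, fm5, fm6, fm7, Lmat, Matrix.of_apply,
      Matrix.map_apply, mulT67, cd_inner_neg, innerBB, h7]
    by_cases h : (1 : Fin 8) = r <;> simp [h]

set_option maxHeartbeats 1000000 in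
theorem LmatE7 : Lmat (octBasis 7) = (LMi 7).map Int.cast := by
  have h0 : ∀ r : Fin 8, LMi 7 r 0 = if (7 : Fin 8) = r then 1 else 0 := by decide
  have h1 : ∀ r : Fin 8, LMi 7 r 1 = if (6 : Fin 8) = r then -1 else 0 := by decide
  have h2 : ∀ r : Fin 8, LMi 7 r 2 = if (5 : Fin 8) = r then 1 else 0 := by decide
  have h3 : ∀ r : Fin 8, LMi 7 r 3 = if (4 : Fin 8) = r then 1 else 0 := by decide
  have h4 : ∀ r : Fin 8, LMi 7 r 4 = if (3 : Fin 8) = r then -1 else 0 := by decide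
  have h5 : ∀ r : Fin 8, LMi 7 r 5 = if (2 : Fin 8) = r then -1 else 0 := by decide
  have h6 : ∀ r : Fin 8, LMi 7 r 6 = if (1 : Fin 8) = r then 1 else 0 := by decide
  have h7 : ∀ r : Fin 8, LMi 7 r 7 = if (0 : Fin 8) = r then -1 else 0 := by decide
  ext r c
  fin_cases c
  · simp only [fm0, fm1, fm2, fm3, fm4, fm5, fm6, fm7, Lmat, Matrix.of_apply,
      Matrix.map_apply, mulT70, cd_inner_neg, innerBB, h0]
    by_cases h : (7 : Fin 8) = r <;> simp [h]
  · simp only [fm0, fm1, fm2, fm3, fm4, fm5, fm6, fm7, Lmat, Matrix.of_apply,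
      Matrix.map_apply, mulT71, cd_inner_neg, innerBB, h1]
    by_cases h : (6 : Fin 8) = r <;> simp [h]
  · simp only [fm0, fm1, fm2, fm3, fm4, fm5, fm6, fm7, Lmat, Matrix.of_apply,
      Matrix.map_apply, mulT72, cd_inner_neg, innerBB, h2]
    by_cases h : (5 : Fin 8) = r <;> simp [h]
  · simp only [fm0, fm1, fm2, fm3, fm4, fm5, fm6, fm7, Lmat, Matrix.of_apply,
      Matrix.map_apply, mulT73, cd_inner_neg, innerBB, h3]
    by_cases h : (4 : Fin 8) = r <;> simp [h]
  · simp only [fm0, fm1, fm2, fm3, fm4, fm5, fm6, fm7, Lmat, Matrix.of_apply,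
      Matrix.map_apply, mulT74, cd_inner_neg, innerBB, h4]
    by_cases h : (3 : Fin 8) = r <;> simp [h]
  · simp only [fm0, fm1, fm2, fm3, fm4, fm5, fm6, fm7, Lmat, Matrix.of_apply,
      Matrix.map_apply, mulT75, cd_inner_neg, innerBB, h5]
    by_cases h : (2 : Fin 8) = r <;> simp [h]
  · simp only [fm0, fm1, fm2, fm3, fm4, fm5, fm6, fm7, Lmat, Matrix.of_apply,
      Matrix.map_apply, mulT76, cd_inner_neg, innerBB, h6]
    by_cases h : (1 : Fin 8) = r <;> simp [h]
  · simp only [fm0, fm1, fm2, fm3, fm4, fm5, fm6, fm7, Lmat, Matrix.of_apply,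
      Matrix.map_apply, mulT77, cd_inner_neg, innerBB, h7]
    by_cases h : (0 : Fin 8) = r <;> simp [h]

set_option maxHeartbeats 1000000 in
theorem LMi_facts : ∀ α : Fin 8, 1 ≤ α.val →
    (LMi α)ᵀ = -(LMi α) ∧ LMi α * LMi α = -1 := by decide

set_option maxHeartbeats 4000000 in
theorem LMi_anti : ∀ α β : Fin 8, 1 ≤ α.val → 1 ≤ β.val → α ≠ β →
    LMi α * LMi β + LMi β * LMi α = 0 := by decide

theorem LmatE : ∀ α : Fin 8, 1 ≤ α.val → Lmat (octBasis α) = (LMi α).map Int.cast := by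
  intro α hα
  fin_cases α
  · exact absurd hα (by decide)
  · exact LmatE1
  · exact LmatE2
  · exact LmatE3
  · exact LmatE4
  · exact LmatE5
  · exact LmatE6
  · exact LmatE7

/-! ### Transfer along `Int.cast` -/

theorem mapC_transpose {k : ℕ} (M : Matrix (Fin k) (Fin k) ℤ) :
    (M.map (Int.cast : ℤ → ℝ))ᵀ = Mᵀ.map Int.cast := by
  ext i j; simp [Matrix.map_apply]

theorem mapC_neg {k : ℕ} (M : Matrix (Fin k) (Fin k) ℤ) :
    (-M).map (Int.cast : ℤ → ℝ) = -(M.map Int.cast) := by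
  ext i j; simp [Matrix.map_apply]

theorem mapC_mul {k : ℕ} (M N : Matrix (Fin k) (Fin k) ℤ) :
    (M * N).map (Int.cast : ℤ → ℝ) = M.map Int.cast * N.map Int.cast := by
  ext i j; simp [Matrix.map_apply, Matrix.mul_apply]

theorem mapC_one {k : ℕ} : (1 : Matrix (Fin k) (Fin k) ℤ).map (Int.cast : ℤ → ℝ) = 1 := by
  ext i j; simp [Matrix.map_apply, Matrix.one_apply, apply_ite (Int.cast : ℤ → ℝ)]

theorem Lmat_skew : ∀ α : Fin 8, 1 ≤ α.val → (Lmat (octBasis α))ᵀ = -Lmat (octBasis α) := by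
  intro α hα
  rw [LmatE α hα, mapC_transpose, (LMi_facts α hα).1, mapC_neg]

theorem Lmat_sq : ∀ α : Fin 8, 1 ≤ α.val →
    Lmat (octBasis α) * Lmat (octBasis α) = -1 := by
  intro α hα
  rw [LmatE α hα, ← mapC_mul, (LMi_facts α hα).2, mapC_neg, mapC_one]

theorem Lmat_anti : ∀ α β : Fin 8, 1 ≤ α.val → 1 ≤ β.val → α ≠ β →
    Lmat (octBasis α) * Lmat (octBasis β) + Lmat (octBasis β) * Lmat (octBasis α) = 0 := by
  intro α β hα hβ hne
  rw [LmatE α hα, LmatE β hβ, ← mapC_mul, ← mapC_mul]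
  have h := LMi_anti α β hα hβ hne
  have h2 : LMi α * LMi β = -(LMi β * LMi α) := eq_neg_of_add_eq_zero_left h
  rw [h2, mapC_neg, neg_add_cancel]

/-! ### Properties of `diagExt` -/

theorem diagExt_transpose (m n : ℕ) (A : Matrix (Fin m) (Fin m) ℝ) :
    (diagExt m n A)ᵀ = diagExt m n Aᵀ := by
  ext i j
  simp only [diagExt, Matrix.transpose_apply, Matrix.of_apply]
  rcases Nat.eq_zero_or_pos m with hm | hm
  · simp [hm]
  · simp only [dif_pos hm]
    rcases eq_or_ne (i.val / m) (j.val / m) with h | h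
    · simp [h]
    · rw [if_neg h, if_neg (Ne.symm h)]

theorem diagExt_neg (m n : ℕ) (A : Matrix (Fin m) (Fin m) ℝ) :
    diagExt m n (-A) = -diagExt m n A := by
  ext i j
  simp only [diagExt, Matrix.of_apply, Matrix.neg_apply]
  rcases Nat.eq_zero_or_pos m with hm | hm
  · simp [hm]
  · simp only [dif_pos hm]
    split <;> simp

theorem diagExt_add (m n : ℕ) (A B : Matrix (Fin m) (Fin m) ℝ) :
    diagExt m n (A + B) = diagExt m n A + diagExt m n B := by
  ext i j
  simp only [diagExt, Matrix.of_apply, Matrix.add_apply]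
  rcases Nat.eq_zero_or_pos m with hm | hm
  · simp [hm]
  · simp only [dif_pos hm]
    split <;> simp

theorem diagExt_zero (m n : ℕ) : diagExt m n (0 : Matrix (Fin m) (Fin m) ℝ) = 0 := by
  ext i j
  simp only [diagExt, Matrix.of_apply, Matrix.zero_apply]
  split
  · split <;> simp
  · rfl

theorem diagExt_one (m n : ℕ) (hm : 0 < m) :
    diagExt m n (1 : Matrix (Fin m) (Fin m) ℝ) = 1 := by
  ext i j
  simp only [diagExt, Matrix.of_apply, Matrix.one_apply, dif_pos hm]
  have hdm := Nat.div_add_mod i.val m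
  have hdm' := Nat.div_add_mod j.val m
  rcases eq_or_ne i j with h | h
  · subst h; simp
  · have hij : i.val ≠ j.val := fun hc => h (Fin.ext hc)
    rw [if_neg h]
    rcases eq_or_ne (i.val / m) (j.val / m) with h1 | h1
    · rw [if_pos h1, if_neg]
      intro h2
      rw [Fin.mk.injEq] at h2
      exact hij (by rw [← Nat.div_add_mod i.val m, ← Nat.div_add_mod j.val m, h1, h2])
    · rw [if_neg h1]

theorem sum_blocks {M : Type*} [AddCommMonoid M] (m n : ℕ) (f : Fin (m * n) → M) :
    ∑ k, f k = ∑ p : Fin n × Fin m, f (finCongr (Nat.mul_comm n m) (finProdFinEquiv p)) :=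
  (Fintype.sum_equiv ((finProdFinEquiv).trans (finCongr (Nat.mul_comm n m))) _ _
    (fun _ => rfl)).symm

theorem diagExt_mul (m n : ℕ) (hm : 0 < m) (A B : Matrix (Fin m) (Fin m) ℝ) :
    diagExt m n A * diagExt m n B = diagExt m n (A * B) := by
  ext i j
  rw [Matrix.mul_apply]
  simp only [diagExt, Matrix.of_apply, dif_pos hm]
  rw [sum_blocks m n]
  rw [Fintype.sum_prod_type]
  have hval : ∀ (q : Fin n) (r : Fin m),
      ((finCongr (Nat.mul_comm n m) (finProdFinEquiv (q, r))) : Fin (m * n)).val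
        = r.val + m * q.val := fun _ _ => rfl
  have hd : ∀ (q : Fin n) (r : Fin m), (r.val + m * q.val) / m = q.val := by
    intro q r
    rw [Nat.add_mul_div_left _ _ hm, Nat.div_eq_of_lt r.isLt, Nat.zero_add]
  have hmod : ∀ (q : Fin n) (r : Fin m), (r.val + m * q.val) % m = r.val := by
    intro q r
    rw [Nat.add_mul_mod_self_left, Nat.mod_eq_of_lt r.isLt]
  have hiq : i.val / m < n := by
    refine (Nat.div_lt_iff_lt_mul hm).2 ?_
    rw [Nat.mul_comm n m]; exact i.isLt
  have hstep : ∀ q : Fin n,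
      (∑ r : Fin m,
        (if i.val / m = ((finCongr (Nat.mul_comm n m) (finProdFinEquiv (q, r))) : Fin (m * n)).val / m
          then A ⟨i.val % m, Nat.mod_lt _ hm⟩
            ⟨((finCongr (Nat.mul_comm n m) (finProdFinEquiv (q, r))) : Fin (m * n)).val % m, Nat.mod_lt _ hm⟩ else 0) *
        (if ((finCongr (Nat.mul_comm n m) (finProdFinEquiv (q, r))) : Fin (m * n)).val / m = j.val / m
          then B ⟨((finCongr (Nat.mul_comm n m) (finProdFinEquiv (q, r))) : Fin (m * n)).val % m, Nat.mod_lt _ hm⟩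
            ⟨j.val % m, Nat.mod_lt _ hm⟩ else 0))
      = if (⟨i.val / m, hiq⟩ : Fin n) = q then
          (if i.val / m = j.val / m then
            ∑ r : Fin m, A ⟨i.val % m, Nat.mod_lt _ hm⟩ r * B r ⟨j.val % m, Nat.mod_lt _ hm⟩ else 0)
        else 0 := by
    intro q
    simp only [hval, hd, hmod, Fin.eta]
    rcases eq_or_ne (⟨i.val / m, hiq⟩ : Fin n) q with h | h
    · have hq : i.val / m = q.val := by rw [← h]
      rw [if_pos h]
      rcases eq_or_ne (i.val / m) (j.val / m) with h2 | h2
      · have hq2 : q.val = j.val / m := by omega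
        rw [if_pos h2]
        refine Finset.sum_congr rfl fun r _ => ?_
        rw [if_pos hq, if_pos hq2]
      · have hq2 : q.val ≠ j.val / m := by omega
        rw [if_neg h2]
        refine Finset.sum_eq_zero fun r _ => ?_
        rw [if_neg hq2, mul_zero]
    · have hq : i.val / m ≠ q.val := fun hc => h (Fin.ext hc)
      rw [if_neg h]
      refine Finset.sum_eq_zero fun r _ => ?_
      rw [if_neg hq, zero_mul]
  rw [Finset.sum_congr rfl fun q _ => hstep q, Finset.sum_ite_eq Finset.univ]
  simp [Matrix.mul_apply]

/-! ### Quadratic form lemmas -/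

theorem mulVec_dot_self_eq_zero {N : ℕ} (D : Matrix (Fin N) (Fin N) ℝ)
    (hD : Dᵀ = -D) (x : Fin N → ℝ) : D.mulVec x ⬝ᵥ x = 0 := by
  have h : D.mulVec x ⬝ᵥ x = -(D.mulVec x ⬝ᵥ x) := by
    calc D.mulVec x ⬝ᵥ x = x ⬝ᵥ D.mulVec x := dotProduct_comm _ _
    _ = Matrix.vecMul x D ⬝ᵥ x := Matrix.dotProduct_mulVec _ _ _
    _ = Dᵀ.mulVec x ⬝ᵥ x := by rw [Matrix.mulVec_transpose]
    _ = -(D.mulVec x ⬝ᵥ x) := by rw [hD, Matrix.neg_mulVec, neg_dotProduct]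
  linarith

theorem mulVec_dot_mulVec {N : ℕ} (C D : Matrix (Fin N) (Fin N) ℝ)
    (hC : Cᵀ = -C) (x : Fin N → ℝ) :
    C.mulVec x ⬝ᵥ D.mulVec x = -((C * D).mulVec x ⬝ᵥ x) := by
  calc C.mulVec x ⬝ᵥ D.mulVec x = D.mulVec x ⬝ᵥ C.mulVec x := dotProduct_comm _ _
  _ = Matrix.vecMul (D.mulVec x) C ⬝ᵥ x := Matrix.dotProduct_mulVec _ _ _
  _ = Cᵀ.mulVec (D.mulVec x) ⬝ᵥ x := by rw [Matrix.mulVec_transpose]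
  _ = -((C * D).mulVec x ⬝ᵥ x) := by
      rw [hC, Matrix.neg_mulVec, neg_dotProduct, Matrix.mulVec_mulVec]


/-- The left multiplications `L_u` by the seven imaginary
octonion units are skew-symmetric, square to `-Id₈` and pairwise anticommute;
consequently they give `7` orthonormal tangent vector fields on `S^7`, and
their diagonal extensions give `7` orthonormal tangent vector fields on
`S^(8n-1)` for every `n`. -/
theorem seven_fields_from_left_multiplications :
    (∀ α : Fin 8, 1 ≤ α.val →
      (Lmat (octBasis α))ᵀ = -Lmat (octBasis α) ∧
      Lmat (octBasis α) * Lmat (octBasis α) = -1) ∧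
    (∀ α β : Fin 8, 1 ≤ α.val → 1 ≤ β.val → α ≠ β →
      Lmat (octBasis α) * Lmat (octBasis β) + Lmat (octBasis β) * Lmat (octBasis α) = 0) ∧
    (∀ n : ℕ, ∀ x : Fin (8 * n) → ℝ, x ⬝ᵥ x = 1 →
      ∀ α β : Fin 8, 1 ≤ α.val → 1 ≤ β.val →
        (diagExt 8 n (Lmat (octBasis α))).mulVec x ⬝ᵥ x = 0 ∧
        (diagExt 8 n (Lmat (octBasis α))).mulVec x ⬝ᵥ
            (diagExt 8 n (Lmat (octBasis β))).mulVec x = if α = β then 1 else 0) := by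
  have hm : 0 < 8 := by norm_num
  refine ⟨fun α hα => ⟨Lmat_skew α hα, Lmat_sq α hα⟩, Lmat_anti, ?_⟩
  intro n x hx α β hα hβ
  set D : Fin 8 → Matrix (Fin (8 * n)) (Fin (8 * n)) ℝ :=
    fun γ => diagExt 8 n (Lmat (octBasis γ)) with hD
  have hskew : ∀ γ : Fin 8, 1 ≤ γ.val → (D γ)ᵀ = -(D γ) := by
    intro γ hγ
    rw [hD]
    simp only
    rw [diagExt_transpose, Lmat_skew γ hγ, diagExt_neg]
  constructor
  · exact mulVec_dot_self_eq_zero _ (hskew α hα) x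
  · rcases eq_or_ne α β with rfl | hne
    · rw [if_pos rfl, mulVec_dot_mulVec _ _ (hskew α hα) x]
      have hsq : D α * D α = -1 := by
        rw [hD]
        simp only
        rw [diagExt_mul 8 n hm, Lmat_sq α hα, diagExt_neg, diagExt_one 8 n hm]
      rw [hsq, Matrix.neg_mulVec, Matrix.one_mulVec, neg_dotProduct, neg_neg, hx]
    · rw [if_neg hne]
      have hanti : D α * D β + D β * D α = 0 := by
        rw [hD]
        simp only
        rw [diagExt_mul 8 n hm, diagExt_mul 8 n hm, ← diagExt_add,
          Lmat_anti α β hα hβ hne, diagExt_zero]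
      have h1 : (D α).mulVec x ⬝ᵥ (D β).mulVec x = -((D α * D β).mulVec x ⬝ᵥ x) :=
        mulVec_dot_mulVec _ _ (hskew α hα) x
      have h2 : (D α).mulVec x ⬝ᵥ (D β).mulVec x = -((D β * D α).mulVec x ⬝ᵥ x) := by
        rw [dotProduct_comm]
        exact mulVec_dot_mulVec _ _ (hskew β hβ) x
      have h3 : (D α * D β).mulVec x ⬝ᵥ x + (D β * D α).mulVec x ⬝ᵥ x = 0 := by
        rw [← add_dotProduct, ← Matrix.add_mulVec, hanti, Matrix.zero_mulVec,
          zero_dotProduct]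
      linarith
end
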